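/- arXiv:1901.05829 — 8 statements merged into one kernel-verified Lean document; each statement's English description precedes it below -/
import Mathlib

section
/- Let q be a positive integer and λ a partition. Then c^{(q)}_λ ≠ 0 if and only if 𝒲^{(q)}_{r(λ)} ≠ ∅. -/
open Finset

/-- A composition: a list of positive natural numbers. -/
def IsComposition (δ : List ℕ) : Prop := ∀ x ∈ δ, 0 < x

/-- `δ` is `q'`-cumulative: no partial sum of `δ` (including the total sum, so
that the empty composition is excluded) is divisible by `q`. -/
def QCum (q : ℕ) (δ : List ℕ) : Prop :=
  ¬ q ∣ δ.sum ∧ ∀ j, 1 ≤ j → j ≤ δ.length → ¬ q ∣ (δ.take j).sum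

/-- The partition `((q-1)^{r (q-1)}, …, 2^{r 2}, 1^{r 1})` as a multiset. -/
def muOf (q : ℕ) (r : ℕ → ℕ) : Multiset ℕ :=
  ∑ i ∈ Finset.Ico 1 q, Multiset.replicate (r i) i

/-- `𝒲^{(q)}_r`: the set of `q'`-cumulative compositions which rearrange to the
partition `((q-1)^{r (q-1)}, …, 2^{r 2}, 1^{r 1})`. -/
def W (q : ℕ) (r : ℕ → ℕ) : Set (List ℕ) :=
  {δ | (↑δ : Multiset ℕ) = muOf q r ∧ QCum q δ}

/-- `r_j(λ)`: the number of parts `i ≥ 1` of `λ` with `i ≡ j (mod q)`. -/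
def rres (q : ℕ) (lam : Multiset ℕ) (j : ℕ) : ℕ :=
  Multiset.card (lam.filter fun i => 1 ≤ i ∧ i % q = j)

/-- `c^{(q)}_λ`: the number of `q'`-cumulative compositions rearranging to `λ`. -/
noncomputable def cnum (q : ℕ) (lam : Multiset ℕ) : ℕ :=
  Nat.card {δ : List ℕ // (↑δ : Multiset ℕ) = lam ∧ QCum q δ}

/-- `‖r‖ = ∑_{i=1}^{q-1} i·r_i`. -/
def normk (q : ℕ) (r : ℕ → ℕ) : ℕ := ∑ i ∈ Finset.Ico 1 q, i * r i

/-- `|r|_q = (q-1) + ∑_{i=2}^{q-1} (q-i)·r_i`. -/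
def absq (q : ℕ) (r : ℕ → ℕ) : ℕ := (q - 1) + ∑ i ∈ Finset.Ico 2 q, (q - i) * r i

/-- `max r = max{r_1, …, r_{q-1}}`. -/
def maxr (q : ℕ) (r : ℕ → ℕ) : ℕ := (Finset.Ico 1 q).sup r

/- ### Auxiliary lemmas -/

lemma count_muOf (q : ℕ) (r : ℕ → ℕ) (n : ℕ) :
    Multiset.count n (muOf q r) = if n ∈ Finset.Ico 1 q then r n else 0 := by
  rw [muOf, Multiset.count_sum']
  split_ifs with h
  · rw [Finset.sum_eq_single n]
    · simp [Multiset.count_replicate]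
    · intro b _ hb
      simp only [Multiset.count_replicate]
      rw [if_neg hb]
    · intro hn; exact absurd h hn
  · apply Finset.sum_eq_zero
    intro b hb
    have : n ≠ b := by rintro rfl; exact h hb
    simp only [Multiset.count_replicate]
    rw [if_neg (Ne.symm this)]

lemma sum_map_mod (q : ℕ) (l : List ℕ) : (l.map (· % q)).sum % q = l.sum % q := by
  induction l with
  | nil => rfl
  | cons a t ih =>
    simp only [List.map_cons, List.sum_cons]
    rw [Nat.add_mod, ih, Nat.mod_mod_of_dvd, ← Nat.add_mod]
    · exact dvd_refl q

lemma sum_filter_ne_zero (l : List ℕ) : (l.filter (· ≠ 0)).sum = l.sum := by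
  simp only [ne_eq, decide_not]
  induction l with
  | nil => rfl
  | cons a t ih =>
    by_cases h : a = 0
    · subst h; simpa using ih
    · simp [List.filter_cons, h, ih]

/-- prefixes of a filter come from filtering prefixes -/
lemma take_filter (p : ℕ → Bool) (l : List ℕ) (j : ℕ) :
    ∃ j' ≤ l.length, (l.take j').filter p = (l.filter p).take j := by
  induction l generalizing j with
  | nil => exact ⟨0, le_refl _, by simp⟩
  | cons a t ih =>
    by_cases hp : p a
    · cases j with
      | zero => exact ⟨0, by simp, by simp⟩
      | succ k =>
        obtain ⟨j', hj', h⟩ := ih k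
        exact ⟨j' + 1, by simpa using hj', by simp [List.filter_cons, hp, h]⟩
    · obtain ⟨j', hj', h⟩ := ih j
      refine ⟨j' + 1, by simpa using hj', ?_⟩
      simp only [List.take_succ_cons, List.filter_cons]
      simp [hp, h]

/-- lifting a list along `Multiset.map` -/
lemma lift_map (f : ℕ → ℕ) (l : List ℕ) :
    ∀ s : Multiset ℕ, s.map f = ↑l → ∃ m : List ℕ, (↑m : Multiset ℕ) = s ∧ m.map f = l := by
  induction l with
  | nil =>
    intro s h
    refine ⟨[], ?_, rfl⟩
    have : s = 0 := by
      rw [← Multiset.card_eq_zero]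
      have := congrArg Multiset.card h
      simpa using this
    simp [this]
  | cons a t ih =>
    intro s h
    have h' : s.map f = a ::ₘ (↑t : Multiset ℕ) := by simpa using h
    obtain ⟨b, hb, hfb, herase⟩ := (Multiset.map_eq_cons f s (↑t) a).mpr h'
    obtain ⟨m, hm, hmap⟩ := ih (s.erase b) herase
    refine ⟨b :: m, ?_, by simp [hmap, hfb]⟩
    have : (↑(b :: m) : Multiset ℕ) = b ::ₘ ↑m := rfl
    rw [this, hm, Multiset.cons_erase hb]

lemma finite_rearr (lam : Multiset ℕ) : {δ : List ℕ | (↑δ : Multiset ℕ) = lam}.Finite := by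
  apply Set.Finite.subset (List.finite_toSet lam.toList.permutations)
  intro δ hδ
  simp only [Set.mem_setOf_eq] at hδ
  have : (↑δ : Multiset ℕ) = ↑lam.toList := by rw [hδ, Multiset.coe_toList]
  simpa [List.mem_permutations] using Multiset.coe_eq_coe.mp this

/-- Proposition 1 (nonvanishing): `c^{(q)}_λ ≠ 0` iff `𝒲^{(q)}_{r(λ)} ≠ ∅`. -/
theorem stmt1 (q : ℕ) (hq : 0 < q) (lam : Multiset ℕ) (hlam : ∀ x ∈ lam, 0 < x) :
    cnum q lam ≠ 0 ↔ (W q (rres q lam)).Nonempty := by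
  have hfin : Finite {δ : List ℕ // (↑δ : Multiset ℕ) = lam ∧ QCum q δ} := by
    have h1 : {δ : List ℕ | (↑δ : Multiset ℕ) = lam ∧ QCum q δ}.Finite :=
      (finite_rearr lam).subset (fun δ hδ => hδ.1)
    exact h1.to_subtype
  rw [cnum, Nat.card_ne_zero]
  constructor
  · rintro ⟨⟨δ, hδ, hsum, hpre⟩, -⟩
    -- forward direction
    set δ' := (δ.map (· % q)).filter (· ≠ 0) with hδ'def
    refine ⟨δ', ?_, ?_, ?_⟩
    · -- multiset equality
      have hcoe : (↑δ' : Multiset ℕ) = (lam.map (· % q)).filter (· ≠ 0) := by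
        rw [hδ'def]
        rw [← hδ]
        simp [Multiset.map_coe, Multiset.filter_coe]
      rw [hcoe]
      ext n
      rw [count_muOf, Multiset.count_filter]
      by_cases h0 : n = 0
      · simp [h0, Finset.mem_Ico]
      by_cases hlt : n < q
      · have hmem : n ∈ Finset.Ico 1 q := by
          simp [Finset.mem_Ico]; omega
        simp only [h0, hlt, hmem, if_true, ne_eq, not_false_eq_true, if_pos]
        rw [Multiset.count_map, rres]
        congr 1
        apply Multiset.filter_congr
        intro x hx
        have := hlam x hx
        constructor
        · intro h; exact ⟨this, h.symm⟩
        · intro h; exact h.2.symm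
      · have hmem : n ∉ Finset.Ico 1 q := by simp [Finset.mem_Ico]; omega
        simp only [hmem, if_false, ne_eq, h0, not_false_eq_true, if_pos]
        rw [Multiset.count_map]
        convert Multiset.card_zero
        rw [Multiset.filter_eq_nil]
        intro x _ h
        exact hlt (by rw [h]; exact Nat.mod_lt _ hq)
    · -- sum not divisible
      rw [Nat.dvd_iff_mod_eq_zero] at hsum ⊢
      rw [hδ'def]
      have : ((δ.map (· % q)).filter (· ≠ 0)).sum = (δ.map (· % q)).sum := by
        simpa using sum_filter_ne_zero (δ.map (· % q))
      rw [this, sum_map_mod]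
      exact hsum
    · -- prefixes not divisible
      intro j hj1 hj2
      obtain ⟨j', hj'len, hj'⟩ := take_filter (fun x => decide (x ≠ 0)) (δ.map (· % q)) j
      have hj'1 : 1 ≤ j' := by
        by_contra h
        have : j' = 0 := by omega
        subst this
        simp only [List.take_zero, List.filter_nil] at hj'
        have : (δ'.take j).length = 0 := by rw [← hj']; simp
        rw [List.length_take] at this
        omega
      have hj'len' : j' ≤ δ.length := by simpa using hj'len
      have hkey := hpre j' hj'1 hj'len'
      rw [Nat.dvd_iff_mod_eq_zero] at hkey ⊢
      have heq : (δ'.take j).sum = (((δ.take j').map (· % q)).filter (· ≠ 0)).sum := by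
        rw [hδ'def, ← hj', List.map_take]
      rw [heq]
      have h1 : (((δ.take j').map (· % q)).filter (· ≠ 0)).sum = ((δ.take j').map (· % q)).sum := by
        simpa using sum_filter_ne_zero ((δ.take j').map (· % q))
      rw [h1, sum_map_mod]
      exact hkey
  · -- backward direction
    rintro ⟨δ', hδ'mu, hsum, hpre⟩
    set A := lam.filter (fun x => x % q ≠ 0) with hA
    set B := lam.filter (fun x => ¬ x % q ≠ 0) with hB
    have hAB : A + B = lam := Multiset.filter_add_not _ lam
    -- A.map (%q) = ↑δ'
    have hmapA : A.map (· % q) = (↑δ' : Multiset ℕ) := by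
      rw [hδ'mu]
      ext n
      rw [count_muOf, Multiset.count_map, hA, Multiset.filter_filter]
      by_cases h0 : n = 0
      · subst h0
        simp only [Finset.mem_Ico, if_neg (by omega : ¬ (1 ≤ 0 ∧ 0 < q))]
        convert Multiset.card_zero
        rw [Multiset.filter_eq_nil]
        intro x hx
        rintro ⟨h1, h2⟩
        exact h2 h1.symm
      by_cases hlt : n < q
      · have hmem : n ∈ Finset.Ico 1 q := by simp [Finset.mem_Ico]; omega
        rw [if_pos hmem, rres]
        congr 1
        apply Multiset.filter_congr
        intro x hx
        have hx1 := hlam x hx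
        constructor
        · rintro ⟨h1, h2⟩; exact ⟨hx1, h1.symm⟩
        · rintro ⟨h1, h2⟩
          refine ⟨h2.symm, ?_⟩
          rw [h2]; exact h0
      · have hmem : n ∉ Finset.Ico 1 q := by simp [Finset.mem_Ico]; omega
        rw [if_neg hmem]
        convert Multiset.card_zero
        rw [Multiset.filter_eq_nil]
        intro x _
        rintro ⟨h1, h2⟩
        exact hlt (by rw [h1]; exact Nat.mod_lt _ hq)
    obtain ⟨m, hm, hmmap⟩ := lift_map (· % q) δ' A hmapA
    set δ := m ++ B.toList with hδdef
    have hlenm : m.length = δ'.length := by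
      have := congrArg List.length hmmap
      simpa using this
    have hBmem : ∀ x ∈ B.toList, x % q = 0 := by
      intro x hx
      rw [Multiset.mem_toList, hB] at hx
      have := (Multiset.mem_filter.mp hx).2
      simpa using this
    -- sums modulo q
    have hsumm : m.sum % q = δ'.sum % q := by
      rw [← sum_map_mod q m, hmmap]
    have hsumB : ∀ t : List ℕ, (∀ x ∈ t, x % q = 0) → t.sum % q = 0 := by
      intro t ht
      induction t with
      | nil => simp
      | cons a s ih =>
        simp only [List.sum_cons]
        rw [Nat.add_mod, ht a (by simp), ih (fun x hx => ht x (by simp [hx]))]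
        simp
    refine ⟨⟨δ, ?_, ?_, ?_⟩, hfin⟩
    · show (↑(m ++ B.toList) : Multiset ℕ) = lam
      rw [← Multiset.coe_add, hm, ← hAB]
      congr 1
      exact Multiset.coe_toList B
    · rw [Nat.dvd_iff_mod_eq_zero] at hsum ⊢
      rw [hδdef, List.sum_append, Nat.add_mod, hsumm, hsumB _ hBmem]
      simpa using hsum
    · intro j hj1 hj2
      rw [Nat.dvd_iff_mod_eq_zero]
      by_cases hc : j ≤ m.length
      · have htake : δ.take j = m.take j := by
          rw [hδdef, List.take_append_of_le_length hc]
        have hj2' : j ≤ δ'.length := by omega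
        have hkey := hpre j hj1 hj2'
        rw [Nat.dvd_iff_mod_eq_zero] at hkey
        rw [htake]
        have : (m.take j).sum % q = (δ'.take j).sum % q := by
          rw [← sum_map_mod q (m.take j), List.map_take, hmmap]
        rw [this]; exact hkey
      · have htake : δ.take j = m ++ (B.toList.take (j - m.length)) := by
          rw [hδdef, List.take_append, List.take_of_length_le (by omega)]
        rw [htake, List.sum_append, Nat.add_mod, hsumm,
          hsumB _ (fun x hx => hBmem x (List.mem_of_mem_take hx))]
        rw [Nat.dvd_iff_mod_eq_zero] at hsum
        simpa using hsum
end

section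
/- Let λ be a partition having exactly one part of odd size (all remaining parts being of even size). Then c^{(2)}_λ = (ℓ(λ)−1)! / ∏_{s even} n_s(λ)!. -/
open Finset

/-- The finset of lists rearranging to `m`. -/
noncomputable def permsFinset (m : Multiset ℕ) : Finset (List ℕ) := m.toList.permutations.toFinset

lemma mem_permsFinset {m : Multiset ℕ} {l : List ℕ} :
    l ∈ permsFinset m ↔ (↑l : Multiset ℕ) = m := by
  rw [permsFinset, List.mem_toFinset, List.mem_permutations, ← Multiset.coe_eq_coe,
    Multiset.coe_toList]

lemma permsFinset_zero : permsFinset 0 = {([] : List ℕ)} := by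
  ext l
  simp only [mem_permsFinset, Finset.mem_singleton]
  constructor
  · intro h; exact (Multiset.coe_eq_zero l).mp h
  · rintro rfl; rfl

lemma permsFinset_decomp (m : Multiset ℕ) (hm : m ≠ 0) :
    permsFinset m = m.toFinset.biUnion
      (fun a => (permsFinset (m.erase a)).image (a :: ·)) := by
  ext l
  simp only [mem_permsFinset, Finset.mem_biUnion, Finset.mem_image, Multiset.mem_toFinset]
  constructor
  · intro hl
    have hne : l ≠ [] := by
      rintro rfl; exact hm hl.symm
    obtain ⟨b, t, rfl⟩ := List.exists_cons_of_ne_nil hne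
    have hb : b ∈ m := by rw [← hl]; simp
    refine ⟨b, hb, t, ?_, rfl⟩
    rw [← hl, ← Multiset.cons_coe, Multiset.erase_cons_head]
  · rintro ⟨a, ha, t, ht, rfl⟩
    rw [← Multiset.cons_coe, ht, Multiset.cons_erase ha]

lemma card_permsFinset (m : Multiset ℕ) :
    (permsFinset m).card * ∏ s ∈ m.toFinset, Nat.factorial (m.count s)
      = Nat.factorial (Multiset.card m) := by
  induction m using Multiset.strongInductionOn with
  | ih m IH =>
  by_cases hm : m = 0
  · subst hm; simp [permsFinset_zero]
  · rw [permsFinset_decomp m hm, Finset.card_biUnion]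
    · have hcard : ∀ a ∈ m.toFinset,
          ((permsFinset (m.erase a)).image (a :: ·)).card = (permsFinset (m.erase a)).card :=
        fun a _ => Finset.card_image_of_injective _ (fun x y h => by injection h)
      rw [Finset.sum_congr rfl hcard, Finset.sum_mul]
      have key : ∀ a ∈ m.toFinset,
          (permsFinset (m.erase a)).card * ∏ s ∈ m.toFinset, Nat.factorial (m.count s)
            = m.count a * Nat.factorial (Multiset.card m - 1) := by
        intro a ha
        have ham : a ∈ m := Multiset.mem_toFinset.mp ha
        have hPsub : ∏ s ∈ (m.erase a).toFinset, Nat.factorial ((m.erase a).count s)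
            = ∏ s ∈ m.toFinset, Nat.factorial ((m.erase a).count s) := by
          refine Finset.prod_subset (Multiset.toFinset_subset.mpr
            (Multiset.subset_of_le (Multiset.erase_le a m))) ?_
          intro x _ hx
          rw [Multiset.mem_toFinset] at hx
          rw [Multiset.count_eq_zero_of_notMem hx]; rfl
        have hIH := IH (m.erase a) (Multiset.erase_lt.mpr ham)
        rw [hPsub, Multiset.card_erase_of_mem ham] at hIH
        have hPm : ∏ s ∈ m.toFinset, Nat.factorial (m.count s)
            = m.count a * ∏ s ∈ m.toFinset, Nat.factorial ((m.erase a).count s) := by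
          rw [← Finset.mul_prod_erase _ _ ha, ← Finset.mul_prod_erase _
            (fun s => Nat.factorial ((m.erase a).count s)) ha, ← mul_assoc]
          congr 1
          · rw [Multiset.count_erase_self]
            obtain ⟨k, hk⟩ : ∃ k, m.count a = k + 1 :=
              ⟨m.count a - 1, (Nat.succ_pred_eq_of_pos (Multiset.count_pos.mpr ham)).symm⟩
            rw [hk]; simp [Nat.factorial_succ]
          · refine Finset.prod_congr rfl fun x hx => ?_
            rw [Multiset.count_erase_of_ne (Finset.ne_of_mem_erase hx)]
        rw [hPm, ← mul_assoc, mul_comm (permsFinset (m.erase a)).card, mul_assoc, hIH]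
        rfl
      rw [Finset.sum_congr rfl key, ← Finset.sum_mul, Multiset.toFinset_sum_count_eq]
      obtain ⟨n, hn⟩ : ∃ n, Multiset.card m = n + 1 :=
        ⟨Multiset.card m - 1, (Nat.succ_pred_eq_of_pos (Multiset.card_pos.mpr hm)).symm⟩
      rw [hn]; simp [Nat.factorial_succ]
    · intro a ha b hb hab
      simp only [Finset.disjoint_left, Finset.mem_image]
      rintro l ⟨t, _, rfl⟩ ⟨t', _, h⟩
      injection h with h1
      exact hab h1.symm


/-- If `λ` has exactly one odd part then
`c^{(2)}_λ = (ℓ(λ)-1)! / ∏_{s even} n_s(λ)!`. -/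
theorem stmt5 (lam : Multiset ℕ) (hlam : ∀ x ∈ lam, 0 < x)
    (h : Multiset.card (lam.filter fun i => i % 2 = 1) = 1) :
    cnum 2 lam =
      Nat.factorial (Multiset.card lam - 1) /
        ∏ s ∈ lam.toFinset.filter (fun s => s % 2 = 0), Nat.factorial (lam.count s) := by
  classical
  obtain ⟨a, hfa⟩ := Multiset.card_eq_one.mp h
  have ha_mem_f : a ∈ lam.filter fun i => i % 2 = 1 := by rw [hfa]; simp
  obtain ⟨ha_mem, ha_odd⟩ := Multiset.mem_filter.mp ha_mem_f
  set evens : Multiset ℕ := lam.filter (fun i => i % 2 = 0) with hevens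
  have hsplit : a ::ₘ evens = lam := by
    have h1 := Multiset.filter_add_not (fun i => i % 2 = 1) lam
    have h2 : lam.filter (fun i => ¬ i % 2 = 1) = evens := by
      rw [hevens]
      exact Multiset.filter_congr (fun x _ => by omega)
    rw [hfa, h2] at h1
    rw [← Multiset.singleton_add]
    exact h1
  have heven_mem : ∀ x ∈ evens, x % 2 = 0 := fun x hx => (Multiset.mem_filter.mp hx).2
  -- forward structure lemma
  have main1 : ∀ δ : List ℕ, (↑δ : Multiset ℕ) = lam → QCum 2 δ →
      δ = a :: δ.tail ∧ (↑δ.tail : Multiset ℕ) = evens := by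
    intro δ hδ hQ
    have hne : δ ≠ [] := by
      rintro rfl
      rw [← hδ] at ha_mem
      simp at ha_mem
    obtain ⟨b, t, rfl⟩ := List.exists_cons_of_ne_nil hne
    have hb_odd : b % 2 = 1 := by
      have := hQ.2 1 le_rfl (by simp)
      simp only [List.take_succ_cons, List.take_zero, List.sum_cons, List.sum_nil,
        add_zero] at this
      omega
    have hcons : b ::ₘ (↑t : Multiset ℕ) = lam := by rw [← hδ]; rfl
    have hfilter : b ::ₘ ((↑t : Multiset ℕ).filter fun i => i % 2 = 1) = {a} := by
      rw [← hfa, ← hcons]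
      exact (Multiset.filter_cons_of_pos (p := fun i => i % 2 = 1) (↑t) hb_odd).symm
    have ht0 : ((↑t : Multiset ℕ).filter fun i => i % 2 = 1) = 0 := by
      have hc := congrArg Multiset.card hfilter
      rw [Multiset.card_cons, Multiset.card_singleton] at hc
      exact Multiset.card_eq_zero.mp (by omega)
    have hba : b = a := by
      rw [ht0] at hfilter
      exact Multiset.singleton_inj.mp hfilter
    subst hba
    refine ⟨rfl, ?_⟩
    have hall : ∀ x ∈ t, x % 2 = 0 := by
      intro x hx
      have : ¬ x % 2 = 1 := by
        have h0 := Multiset.filter_eq_nil.mp ht0 x (by exact_mod_cast hx)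
        exact h0
      omega
    have : (↑t : Multiset ℕ) = evens := by
      rw [hevens, ← hcons, Multiset.filter_cons_of_neg _ (by omega),
        Multiset.filter_eq_self.mpr (fun x hx => hall x (by exact_mod_cast hx))]
    exact this
  -- backward structure lemma
  have main2 : ∀ t : List ℕ, (↑t : Multiset ℕ) = evens →
      ((↑(a :: t) : Multiset ℕ) = lam ∧ QCum 2 (a :: t)) := by
    intro t ht
    have hall : ∀ x ∈ t, x % 2 = 0 := fun x hx =>
      heven_mem x (by rw [← ht]; exact_mod_cast hx)
    constructor
    · rw [← Multiset.cons_coe, ht, hsplit]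
    · constructor
      · have hdvd : 2 ∣ t.sum := List.dvd_sum (fun x hx => by have := hall x hx; omega)
        simp only [List.sum_cons]
        omega
      · intro j hj _
        obtain ⟨k, rfl⟩ : ∃ k, j = k + 1 := ⟨j - 1, by omega⟩
        rw [List.take_succ_cons]
        have hdvd : 2 ∣ (t.take k).sum :=
          List.dvd_sum (fun x hx => by have := hall x (List.mem_of_mem_take hx); omega)
        simp only [List.sum_cons]
        omega
  -- the equivalence
  have e : {δ : List ℕ // (↑δ : Multiset ℕ) = lam ∧ QCum 2 δ} ≃
      {t : List ℕ // (↑t : Multiset ℕ) = evens} :=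
    { toFun := fun δ => ⟨δ.1.tail, (main1 δ.1 δ.2.1 δ.2.2).2⟩
      invFun := fun t => ⟨a :: t.1, main2 t.1 t.2⟩
      left_inv := fun δ => Subtype.ext (main1 δ.1 δ.2.1 δ.2.2).1.symm
      right_inv := fun t => Subtype.ext rfl }
  have hcard : cnum 2 lam = (permsFinset evens).card := by
    rw [cnum, Nat.card_congr e, ← Nat.card_eq_finsetCard]
    exact Nat.card_congr (Equiv.subtypeEquivRight fun l => mem_permsFinset.symm)
  have hkey := card_permsFinset evens
  have hlen : Multiset.card evens = Multiset.card lam - 1 := by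
    have := congrArg Multiset.card hsplit
    simp at this
    omega
  have hprod : ∏ s ∈ evens.toFinset, Nat.factorial (evens.count s)
      = ∏ s ∈ lam.toFinset.filter (fun s => s % 2 = 0), Nat.factorial (lam.count s) := by
    rw [hevens, Multiset.toFinset_filter]
    refine Finset.prod_congr rfl fun x hx => ?_
    rw [Multiset.count_filter]
    simp only [Finset.mem_filter] at hx
    rw [if_pos hx.2]
  rw [hcard]
  rw [hlen, hprod] at hkey
  refine (Nat.div_eq_of_eq_mul_left ?_ hkey.symm).symm
  exact Finset.prod_pos fun _ _ => Nat.factorial_pos _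
end

section
/- Let q be a positive integer, r = (r₁,…,r_{q−1}) ∈ ℕ₀^{q−1}, and suppose r₁ = max r. Then 𝒲^{(q)}_r ≠ ∅ if and only if (i) q ∤ ‖r‖ and (ii) max r ≤ |r|_q. -/
open Finset

lemma not_dvd_sub {q N c ρ : ℕ} (hq : 0 < q) (hcN : c ≤ N) (hρ : ρ < q)
    (hdecomp : ∃ A, N = q * A + ρ)
    (hne : (c < q ∧ c ≠ ρ) ∨ (c = q ∧ ρ ≠ 0)) : ¬ q ∣ (N - c) := by
  intro hdvd
  obtain ⟨A, hA⟩ := hdecomp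
  obtain ⟨B, hB⟩ := hdvd
  have hqA : q ∣ q * A := dvd_mul_right q A
  have hqB : q ∣ q * B := dvd_mul_right q B
  have h1 : q ∣ (q * B - q * A) := Nat.dvd_sub hqB hqA
  have h2 : q ∣ (q * A - q * B) := Nat.dvd_sub hqA hqB
  rcases Nat.lt_trichotomy c ρ with h | h | h
  · have := Nat.le_of_dvd (by omega) h1; omega
  · rcases hne with ⟨_, h2'⟩ | ⟨h2', h3⟩ <;> omega
  · have := Nat.le_of_dvd (by omega) h2
    rcases hne with ⟨h2', h3⟩ | ⟨h2', h3⟩ <;> omega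

lemma sum_update_aux {M : Type*} [AddCommMonoid M] (s : Finset ℕ) (r : ℕ → ℕ) (i : ℕ)
    (hi : i ∈ s) (v : ℕ) (F : ℕ → ℕ → M) :
    (∑ j ∈ s, F j (Function.update r i v j)) + F i (r i)
      = (∑ j ∈ s, F j (r j)) + F i v := by
  rw [← Finset.sum_erase_add s _ hi, ← Finset.sum_erase_add s (fun j => F j (r j)) hi]
  have h1 : ∑ j ∈ s.erase i, F j (Function.update r i v j) = ∑ j ∈ s.erase i, F j (r j) :=
    Finset.sum_congr rfl fun j hj => by
      rw [Function.update_of_ne (Finset.ne_of_mem_erase hj)]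
  rw [h1, Function.update_self]
  abel

lemma countP_replicate' (p : ℕ → Prop) [DecidablePred p] (n a : ℕ) :
    (Multiset.replicate n a).countP p = if p a then n else 0 := by
  induction n with
  | zero => simp
  | succ n ih => rw [Multiset.replicate_succ, Multiset.countP_cons, ih]; split <;> omega

lemma countP_muOf (q : ℕ) (r : ℕ → ℕ) (p : ℕ → Prop) [DecidablePred p] :
    (muOf q r).countP p = ∑ i ∈ Finset.Ico 1 q, if p i then r i else 0 := by
  unfold muOf
  induction Finset.Ico 1 q using Finset.cons_induction with
  | empty => simp
  | cons a s ha ih =>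
      rw [Finset.sum_cons, Finset.sum_cons, Multiset.countP_add, countP_replicate', ih]

lemma muOf_sum (q : ℕ) (r : ℕ → ℕ) : (muOf q r).sum = normk q r := by
  unfold muOf normk
  induction Finset.Ico 1 q using Finset.cons_induction with
  | empty => simp
  | cons a s ha ih =>
      rw [Finset.sum_cons, Finset.sum_cons, Multiset.sum_add, Multiset.sum_replicate, ih,
        smul_eq_mul, mul_comm]

lemma mem_muOf {q : ℕ} {r : ℕ → ℕ} {x : ℕ} (hx : x ∈ muOf q r) : x ∈ Finset.Ico 1 q := by
  unfold muOf at hx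
  rw [Multiset.mem_sum] at hx
  obtain ⟨i, hi, hxi⟩ := hx
  rw [Multiset.eq_of_mem_replicate hxi]
  exact hi

lemma muOf_update {q : ℕ} (r : ℕ → ℕ) {i : ℕ} (hi : i ∈ Finset.Ico 1 q) (hri : 1 ≤ r i) :
    muOf q (Function.update r i (r i - 1)) + {i} = muOf q r := by
  have key := sum_update_aux (Finset.Ico 1 q) r i hi (r i - 1)
    (fun j x => Multiset.replicate x j)
  have h2 : Multiset.replicate (r i) i = Multiset.replicate (r i - 1) i + {i} := by
    obtain ⟨c, hc⟩ : ∃ c, r i = c + 1 := ⟨r i - 1, by omega⟩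
    rw [hc]
    simp only [Multiset.replicate_succ, Nat.add_sub_cancel]
    rw [add_comm, Multiset.singleton_add]
  rw [h2] at key
  have : (muOf q (Function.update r i (r i - 1)) + {i})
      + Multiset.replicate (r i - 1) i = muOf q r + Multiset.replicate (r i - 1) i := by
    unfold muOf
    rw [← key]
    ring_nf
    abel
  exact add_right_cancel this

lemma normk_update {q : ℕ} (r : ℕ → ℕ) {i : ℕ} (hi : i ∈ Finset.Ico 1 q) (hri : 1 ≤ r i) :
    normk q (Function.update r i (r i - 1)) + i = normk q r := by
  have key := sum_update_aux (Finset.Ico 1 q) r i hi (r i - 1) (fun j x => j * x)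
  have h2 : i * r i = i * (r i - 1) + i := by
    obtain ⟨c, hc⟩ : ∃ c, r i = c + 1 := ⟨r i - 1, by omega⟩
    rw [hc, Nat.mul_add]
    simp
  unfold normk
  omega

lemma absq_update {q : ℕ} (r : ℕ → ℕ) {i : ℕ} (hi : i ∈ Finset.Ico 2 q) (hri : 1 ≤ r i) :
    absq q (Function.update r i (r i - 1)) + (q - i) = absq q r := by
  have key := sum_update_aux (Finset.Ico 2 q) r i hi (r i - 1) (fun j x => (q - j) * x)
  have h2 : (q - i) * r i = (q - i) * (r i - 1) + (q - i) := by
    obtain ⟨c, hc⟩ : ∃ c, r i = c + 1 := ⟨r i - 1, by omega⟩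
    rw [hc, Nat.mul_add]
    simp
  unfold absq
  omega

lemma absq_update_one {q : ℕ} (r : ℕ → ℕ) (v : ℕ) :
    absq q (Function.update r 1 v) = absq q r := by
  unfold absq
  congr 1
  refine Finset.sum_congr rfl fun j hj => ?_
  have : 2 ≤ j := (Finset.mem_Ico.mp hj).1
  rw [Function.update_of_ne (by omega)]

lemma normk_split {q : ℕ} (hq : 2 ≤ q) (r : ℕ → ℕ) :
    normk q r = r 1 + ∑ i ∈ Finset.Ico 2 q, i * r i := by
  have hdiff : Finset.Ico 1 q \ {1} = Finset.Ico 2 q := by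
    ext x; simp [Finset.mem_Ico]; omega
  unfold normk
  rw [Finset.sum_eq_sum_sdiff_singleton_add
    (by simp [Finset.mem_Ico]; omega : (1:ℕ) ∈ Finset.Ico 1 q), hdiff, one_mul, add_comm]

lemma muOf_split {q : ℕ} (hq : 2 ≤ q) (r : ℕ → ℕ) :
    muOf q r = Multiset.replicate (r 1) 1 + ∑ i ∈ Finset.Ico 2 q, Multiset.replicate (r i) i := by
  have hdiff : Finset.Ico 1 q \ {1} = Finset.Ico 2 q := by
    ext x; simp [Finset.mem_Ico]; omega
  unfold muOf
  rw [Finset.sum_eq_sum_sdiff_singleton_add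
    (by simp [Finset.mem_Ico]; omega : (1:ℕ) ∈ Finset.Ico 1 q), hdiff, add_comm]

lemma QCum.append {q : ℕ} {δ : List ℕ} (h : QCum q δ) (x : ℕ) (hx : ¬ q ∣ (δ.sum + x)) :
    QCum q (δ ++ [x]) := by
  constructor
  · simpa using hx
  · intro j hj1 hj2
    simp only [List.length_append, List.length_singleton] at hj2
    rcases Nat.lt_or_ge j (δ.length + 1) with hlt | hge
    · have hj : j ≤ δ.length := by omega
      rw [List.take_append_of_le_length hj]
      exact h.2 j hj1 hj
    · have hj : j = δ.length + 1 := by omega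
      subst hj
      rw [List.take_of_length_le (by simp)]
      simpa using hx


lemma div_le_countP (q : ℕ) (hq : 2 ≤ q) :
    ∀ δ : List ℕ, (∀ x ∈ δ, x < q) →
      (∀ j, 1 ≤ j → j ≤ δ.length → ¬ q ∣ (δ.take j).sum) →
      δ.sum / q ≤ δ.countP (fun x => decide (2 ≤ x)) := by
  intro δ
  induction δ using List.reverseRecOn with
  | nil => simp
  | append_singleton δ x ih =>
    intro hlt hnd
    have hx : x < q := hlt x (by simp)
    have hδlt : ∀ y ∈ δ, y < q := fun y hy => hlt y (by simp [hy])
    have hδnd : ∀ j, 1 ≤ j → j ≤ δ.length → ¬ q ∣ (δ.take j).sum := by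
      intro j h1 h2
      have h3 := hnd j h1 (by simp; omega)
      rwa [List.take_append_of_le_length h2] at h3
    have IH := ih hδlt hδnd
    have hcnt : (δ ++ [x]).countP (fun y => decide (2 ≤ y))
        = δ.countP (fun y => decide (2 ≤ y)) + if 2 ≤ x then 1 else 0 := by
      rw [List.countP_append]
      congr 1
      by_cases h : 2 ≤ x <;> simp [List.countP, List.countP.go, h]
    have hsum : (δ ++ [x]).sum = δ.sum + x := by simp
    rw [hsum, hcnt]
    by_cases h2x : 2 ≤ x
    · rw [if_pos h2x]
      have h1 : (δ.sum + x) / q ≤ (δ.sum + q) / q :=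
        Nat.div_le_div_right (by omega)
      rw [Nat.add_div_right _ (by omega : 0 < q)] at h1
      omega
    · rw [if_neg h2x]
      interval_cases x
      · simpa using IH
      · have hdv : ¬ q ∣ (δ.sum + 1) := by
          have h3 := hnd (δ.length + 1) (by omega) (by simp)
          rwa [List.take_of_length_le (by simp), hsum] at h3
        rw [show δ.sum + 1 = δ.sum.succ from rfl, Nat.succ_div, if_neg hdv]
        omega

lemma forward_dir (q : ℕ) (hq : 2 ≤ q) (r : ℕ → ℕ) (δ : List ℕ)
    (hmem : (↑δ : Multiset ℕ) = muOf q r) (hc : QCum q δ) :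
    ¬ q ∣ normk q r ∧ r 1 ≤ absq q r := by
  have hsum : δ.sum = normk q r := by
    rw [← muOf_sum q r, ← hmem]; simp
  constructor
  · rw [← hsum]; exact hc.1
  · have hlt : ∀ x ∈ δ, x < q := by
      intro x hx
      have hx2 : x ∈ muOf q r := by rw [← hmem]; exact_mod_cast hx
      exact (Finset.mem_Ico.mp (mem_muOf hx2)).2
    have hKm := div_le_countP q hq δ hlt hc.2
    have hcnt : δ.countP (fun x => decide (2 ≤ x)) = ∑ i ∈ Finset.Ico 2 q, r i := by
      have h1 : (↑δ : Multiset ℕ).countP (fun x => 2 ≤ x) = δ.countP (fun x => decide (2 ≤ x)) :=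
        Multiset.coe_countP _ _
      rw [← h1, hmem, countP_muOf]
      have hdiff : Finset.Ico 1 q \ {1} = Finset.Ico 2 q := by
        ext y; simp [Finset.mem_Ico]; omega
      rw [Finset.sum_eq_sum_sdiff_singleton_add
        (by simp [Finset.mem_Ico]; omega : (1:ℕ) ∈ Finset.Ico 1 q), hdiff]
      rw [if_neg (by omega)]
      refine (by omega : ∀ a b : ℕ, a = b → a + 0 = b) _ _ ?_
      refine Finset.sum_congr rfl fun i hi => ?_
      have : 2 ≤ i := (Finset.mem_Ico.mp hi).1
      rw [if_pos (by omega)]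
    rw [hsum, hcnt] at hKm
    -- arithmetic
    have hρ : normk q r % q < q := Nat.mod_lt _ (by omega)
    have hρ0 : normk q r % q ≠ 0 := by
      intro h0
      exact (hsum ▸ hc.1) ((Nat.dvd_iff_mod_eq_zero).mpr h0)
    have hdm : q * (normk q r / q) + normk q r % q = normk q r := Nat.div_add_mod _ q
    have hmul : q * (normk q r / q) ≤ q * (∑ i ∈ Finset.Ico 2 q, r i) :=
      Nat.mul_le_mul_left q hKm
    have hqm : (∑ i ∈ Finset.Ico 2 q, (q - i) * r i) + (∑ i ∈ Finset.Ico 2 q, i * r i)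
        = q * ∑ i ∈ Finset.Ico 2 q, r i := by
      rw [← Finset.sum_add_distrib, Finset.mul_sum]
      refine Finset.sum_congr rfl fun i hi => ?_
      have h2 : 2 ≤ i ∧ i < q := Finset.mem_Ico.mp hi
      rw [← Nat.add_mul, Nat.sub_add_cancel (by omega)]
    have hsplit := normk_split hq r
    unfold absq
    omega


lemma backward_dir (q : ℕ) (hq : 2 ≤ q) :
    ∀ N : ℕ, ∀ r : ℕ → ℕ, normk q r = N → ¬ q ∣ N →
      (∀ i ∈ Finset.Ico 2 q, r i ≤ r 1) → r 1 ≤ absq q r → (W q r).Nonempty := by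
  intro N
  induction N using Nat.strong_induction_on with
  | _ N IH =>
  intro r hN hnd hmax habs
  have hq0 : 0 < q := by omega
  have hN1 : 1 ≤ N := by
    rcases Nat.eq_zero_or_pos N with h | h
    · subst h; exact absurd (dvd_zero q) hnd
    · exact h
  have hsplitN := normk_split hq r
  by_cases hm0 : ∑ i ∈ Finset.Ico 2 q, r i = 0
  · -- base: all parts equal to 1
    have hbz : ∀ i ∈ Finset.Ico 2 q, r i = 0 := Finset.sum_eq_zero_iff.mp hm0
    have hz1 : ∑ i ∈ Finset.Ico 2 q, i * r i = 0 :=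
      Finset.sum_eq_zero fun i hi => by rw [hbz i hi, Nat.mul_zero]
    have hz2 : ∑ i ∈ Finset.Ico 2 q, (q - i) * r i = 0 :=
      Finset.sum_eq_zero fun i hi => by rw [hbz i hi, Nat.mul_zero]
    have hNr1 : N = r 1 := by omega
    have habs' : r 1 ≤ q - 1 := by
      have h4 : absq q r = (q - 1) + 0 := by unfold absq; rw [hz2]
      omega
    refine ⟨List.replicate (r 1) 1, ?_, ?_, ?_⟩
    · have h1 : ((List.replicate (r 1) 1 : List ℕ) : Multiset ℕ)
          = Multiset.replicate (r 1) 1 := by exact_mod_cast Multiset.coe_replicate (r 1) 1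
      rw [h1, muOf_split hq r]
      have h5 : ∑ i ∈ Finset.Ico 2 q, Multiset.replicate (r i) i = 0 :=
        Finset.sum_eq_zero fun i hi => by rw [hbz i hi]; rfl
      rw [h5, add_zero]
    · rw [List.sum_replicate]
      simp only [smul_eq_mul, mul_one]
      rw [← hNr1]; exact hnd
    · intro j hj1 hj2
      rw [List.length_replicate] at hj2
      rw [List.take_replicate, List.sum_replicate]
      simp only [smul_eq_mul, mul_one]
      rw [min_eq_left hj2]
      intro hdvd
      have := Nat.le_of_dvd (by omega) hdvd
      omega
  · -- inductive step
    obtain ⟨i₀, hi₀mem, hi₀⟩ := Finset.exists_ne_zero_of_sum_ne_zero hm0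
    have hi₀b : 2 ≤ i₀ ∧ i₀ < q := Finset.mem_Ico.mp hi₀mem
    have hr1pos : 1 ≤ r 1 := le_trans (by omega) (hmax i₀ hi₀mem)
    have hρq : N % q < q := Nat.mod_lt _ hq0
    have hρ1 : 1 ≤ N % q := by
      rcases Nat.eq_zero_or_pos (N % q) with h | h
      · exact absurd (Nat.dvd_iff_mod_eq_zero.mpr h) hnd
      · exact h
    have hdecomp : ∃ A, N = q * A + N % q := ⟨N / q, (Nat.div_add_mod N q).symm⟩
    have hsingle : ∀ i ∈ Finset.Ico 2 q, i * r i ≤ ∑ j ∈ Finset.Ico 2 q, j * r j :=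
      fun i hi => Finset.single_le_sum (f := fun j => j * r j) (fun j _ => Nat.zero_le _) hi
    by_cases hB : ∃ i ∈ Finset.Ico 2 q, 1 ≤ r i ∧ i ≠ N % q ∧ r 1 + (q - i) ≤ absq q r
    · -- Case B : remove a big part i at the end
      obtain ⟨i, himem, hri, hiρ, hile⟩ := hB
      have hib : 2 ≤ i ∧ i < q := Finset.mem_Ico.mp himem
      have hmem1q : i ∈ Finset.Ico 1 q := Finset.mem_Ico.mpr ⟨by omega, hib.2⟩
      have hnormk' : normk q (Function.update r i (r i - 1)) + i = normk q r :=
        normk_update r hmem1q hri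
      have hiN : i ≤ N := by
        have h1 := hsingle i himem
        have h2 : i * 1 ≤ i * r i := Nat.mul_le_mul_left i hri
        omega
      have hnd' : ¬ q ∣ (N - i) :=
        not_dvd_sub hq0 hiN hρq hdecomp (Or.inl ⟨hib.2, hiρ⟩)
      have habs' : absq q (Function.update r i (r i - 1)) + (q - i) = absq q r :=
        absq_update r himem hri
      have hr1' : Function.update r i (r i - 1) 1 = r 1 := Function.update_of_ne (by omega) _ r
      obtain ⟨δ', hδmem, hδq⟩ := IH (N - i) (by omega) (Function.update r i (r i - 1))
        (by omega) hnd'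
        (fun j hj => by
          have hj2 : 2 ≤ j ∧ j < q := Finset.mem_Ico.mp hj
          rw [hr1']
          by_cases hji : j = i
          · subst hji; rw [Function.update_self]
            have := hmax j hj; omega
          · rw [Function.update_of_ne hji]; exact hmax j hj)
        (by rw [hr1']; omega)
      refine ⟨δ' ++ [i], ?_, ?_⟩
      · have h1 : ((δ' ++ [i] : List ℕ) : Multiset ℕ)
            = (δ' : Multiset ℕ) + (([i] : List ℕ) : Multiset ℕ) := by exact_mod_cast rfl
        rw [h1, hδmem, show (([i] : List ℕ) : Multiset ℕ) = ({i} : Multiset ℕ) from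
          Multiset.coe_singleton i]
        exact muOf_update r hmem1q hri
      · have hsum' : δ'.sum = N - i := by
          have h2 : (↑δ' : Multiset ℕ).sum = δ'.sum := by simp
          have h3 := congrArg Multiset.sum hδmem
          rw [h2, muOf_sum] at h3
          omega
        refine hδq.append i ?_
        rw [hsum', Nat.sub_add_cancel hiN]
        exact hnd
    · by_cases hA : N % q ≠ 1 ∧ ∀ i ∈ Finset.Ico 2 q, r i < r 1
      · -- Case A : remove a part 1 at the end
        obtain ⟨hρne1, hstrict⟩ := hA
        have hmem1 : (1:ℕ) ∈ Finset.Ico 1 q := Finset.mem_Ico.mpr ⟨le_refl 1, by omega⟩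
        have hnormk' : normk q (Function.update r 1 (r 1 - 1)) + 1 = normk q r :=
          normk_update r hmem1 hr1pos
        have hnd' : ¬ q ∣ (N - 1) :=
          not_dvd_sub hq0 (by omega) hρq hdecomp (Or.inl ⟨by omega, by omega⟩)
      
        have habs' : absq q (Function.update r 1 (r 1 - 1)) = absq q r := absq_update_one r _
        obtain ⟨δ', hδmem, hδq⟩ := IH (N - 1) (by omega) (Function.update r 1 (r 1 - 1))
          (by omega) hnd'
          (fun j hj => by
            have hj2 : 2 ≤ j ∧ j < q := Finset.mem_Ico.mp hj
            rw [Function.update_of_ne (by omega : j ≠ 1), Function.update_self]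
            have := hstrict j hj; omega)
          (by rw [Function.update_self, habs']; omega)
        refine ⟨δ' ++ [1], ?_, ?_⟩
        · have h1 : ((δ' ++ [1] : List ℕ) : Multiset ℕ)
              = (δ' : Multiset ℕ) + (([1] : List ℕ) : Multiset ℕ) := by exact_mod_cast rfl
          rw [h1, hδmem, show (([1] : List ℕ) : Multiset ℕ) = ({1} : Multiset ℕ) from
            Multiset.coe_singleton 1]
          exact muOf_update r hmem1 hr1pos
        · have hsum' : δ'.sum = N - 1 := by
            have h2 : (↑δ' : Multiset ℕ).sum = δ'.sum := by simp
            have h3 := congrArg Multiset.sum hδmem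
            rw [h2, muOf_sum] at h3
            omega
          refine hδq.append 1 ?_
          rw [hsum', Nat.sub_add_cancel (by omega)]
          exact hnd
      · -- Case C : remove (N % q) and then 1 at the end
        push_neg at hB hA
        have hqm : (∑ i ∈ Finset.Ico 2 q, (q - i) * r i) + (∑ i ∈ Finset.Ico 2 q, i * r i)
            = q * ∑ i ∈ Finset.Ico 2 q, r i := by
          rw [← Finset.sum_add_distrib, Finset.mul_sum]
          refine Finset.sum_congr rfl fun i hi => ?_
          have h2 : 2 ≤ i ∧ i < q := Finset.mem_Ico.mp hi
          rw [← Nat.add_mul, Nat.sub_add_cancel (by omega)]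
        have habsdef : absq q r = (q-1) + ∑ i ∈ Finset.Ico 2 q, (q-i) * r i := rfl
        obtain ⟨K, hK⟩ := hdecomp
        have hKm : q * K ≤ q * ∑ i ∈ Finset.Ico 2 q, r i := by
          rcases le_or_gt K (∑ i ∈ Finset.Ico 2 q, r i) with h | h
          · exact Nat.mul_le_mul_left q h
          · exfalso
            have h1 : q * ((∑ i ∈ Finset.Ico 2 q, r i) + 1) ≤ q * K :=
              Nat.mul_le_mul_left q (by omega)
            have h3 : q * ((∑ i ∈ Finset.Ico 2 q, r i) + 1)
                = q * (∑ i ∈ Finset.Ico 2 q, r i) + q := by ring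
            omega
        have hρne1 : N % q ≠ 1 := by
          intro hρ1eq
          have hcon := hB i₀ hi₀mem (by omega) (by omega)
          omega
        obtain ⟨j, hjmem, hjge⟩ := hA hρne1
        have hjb : 2 ≤ j ∧ j < q := Finset.mem_Ico.mp hjmem
        have hjr : r j = r 1 := le_antisymm (hmax j hjmem) hjge
        have hdge : r 1 + (q - 1) ≤ absq q r := by
          have h1 : (q - j) * r j ≤ ∑ i ∈ Finset.Ico 2 q, (q - i) * r i :=
            Finset.single_le_sum (f := fun i => (q - i) * r i) (fun i _ => Nat.zero_le _) hjmem
          have h2 : 1 * r j ≤ (q - j) * r j := Nat.mul_le_mul_right (r j) (by omega)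
          omega
        have honly : ∀ i ∈ Finset.Ico 2 q, 1 ≤ r i → i = N % q := by
          intro i hi hri
          by_contra hne
          have hib : 2 ≤ i ∧ i < q := Finset.mem_Ico.mp hi
          have hcon := hB i hi hri hne
          omega
        have hjρ : j = N % q := honly j hjmem (by omega)
        have hρmem : N % q ∈ Finset.Ico 2 q := hjρ ▸ hjmem
        have hrρ : r (N % q) = r 1 := hjρ ▸ hjr
        have hρb : 2 ≤ N % q ∧ N % q < q := Finset.mem_Ico.mp hρmem
        have hρmem1 : N % q ∈ Finset.Ico 1 q := Finset.mem_Ico.mpr ⟨by omega, hρb.2⟩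
        set rA := Function.update r (N % q) (r (N % q) - 1) with hrAdef
        have hnormkA : normk q rA + N % q = normk q r := normk_update r hρmem1 (by omega)
        have habsA : absq q rA + (q - N % q) = absq q r := absq_update r hρmem (by omega)
        have hA1 : rA 1 = r 1 := Function.update_of_ne (by omega) _ r
        set rB := Function.update rA 1 (rA 1 - 1) with hrBdef
        have hmem1 : (1:ℕ) ∈ Finset.Ico 1 q := Finset.mem_Ico.mpr ⟨le_refl 1, by omega⟩
        have hnormkB : normk q rB + 1 = normk q rA := normk_update rA hmem1 (by rw [hA1]; omega)
        have habsB : absq q rB = absq q rA := absq_update_one rA _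
        have hρN : N % q + 1 ≤ N := by
          have h1 := hsingle (N % q) hρmem
          have h2 : (N % q) * 1 ≤ (N % q) * r (N % q) := Nat.mul_le_mul_left _ (by omega)
          omega
        have hndB : ¬ q ∣ (N - (N % q + 1)) := by
          refine not_dvd_sub hq0 hρN hρq ⟨K, hK⟩ ?_
          rcases Nat.lt_or_ge (N % q + 1) q with h | h
          · exact Or.inl ⟨h, by omega⟩
          · exact Or.inr ⟨by omega, by omega⟩
        obtain ⟨δ', hδmem, hδq⟩ := IH (N - (N % q + 1)) (by omega) rB
          (by omega) hndB
          (fun i hi => by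
            have hib : 2 ≤ i ∧ i < q := Finset.mem_Ico.mp hi
            show rB i ≤ rB 1
            rw [show rB 1 = rA 1 - 1 from Function.update_self _ _ _, hA1]
            rw [show rB i = rA i from Function.update_of_ne (by omega : i ≠ 1) _ _]
            by_cases hiρ2 : i = N % q
            · rw [hiρ2, show rA (N % q) = r (N % q) - 1 from Function.update_self _ _ _, hrρ]
            · rw [show rA i = r i from Function.update_of_ne hiρ2 _ _]
              have h4 : r i = 0 := by
                by_contra hri0
                exact hiρ2 (honly i hi (by omega))
              omega)
          (by
            show rB 1 ≤ absq q rB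
            rw [show rB 1 = rA 1 - 1 from Function.update_self _ _ _, hA1, habsB]
            omega)
        refine ⟨δ' ++ [N % q] ++ [1], ?_, ?_⟩
        · have h1 : ((δ' ++ [N % q] ++ [1] : List ℕ) : Multiset ℕ)
              = (δ' : Multiset ℕ) + (([N % q] : List ℕ) : Multiset ℕ)
                + (([1] : List ℕ) : Multiset ℕ) := by exact_mod_cast rfl
          rw [h1, hδmem, show (([N % q] : List ℕ) : Multiset ℕ) = ({N % q} : Multiset ℕ) from
            Multiset.coe_singleton _, show (([1] : List ℕ) : Multiset ℕ) = ({1} : Multiset ℕ) from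
            Multiset.coe_singleton _]
          have e1 : muOf q rB + {1} = muOf q rA := muOf_update rA hmem1 (by rw [hA1]; omega)
          have e2 : muOf q rA + {N % q} = muOf q r := muOf_update r hρmem1 (by omega)
          calc muOf q rB + {N % q} + {1} = muOf q rB + {1} + {N % q} := add_right_comm _ _ _
            _ = muOf q rA + {N % q} := by rw [e1]
            _ = muOf q r := e2
        · have hsum' : δ'.sum = N - (N % q + 1) := by
            have h2 : (↑δ' : Multiset ℕ).sum = δ'.sum := by simp
            have h3 := congrArg Multiset.sum hδmem
            rw [h2, muOf_sum] at h3
            omega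
          have hstep1 : QCum q (δ' ++ [N % q]) := by
            refine hδq.append _ ?_
            rw [hsum', show N - (N % q + 1) + N % q = N - 1 from by omega]
            exact not_dvd_sub hq0 (by omega) hρq ⟨K, hK⟩ (Or.inl ⟨by omega, by omega⟩)
          have hsum2 : (δ' ++ [N % q]).sum = N - 1 := by
            rw [List.sum_append, hsum']
            simp
            omega
          exact hstep1.append 1 (by rw [hsum2, Nat.sub_add_cancel (by omega)]; exact hnd)

/-- Lemma 1: if `r₁ = max r` then `𝒲^{(q)}_r ≠ ∅` iff `q ∤ ‖r‖` and
`max r ≤ |r|_q`. -/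
theorem stmt7 (q : ℕ) (hq : 0 < q) (r : ℕ → ℕ) (hr : r 1 = maxr q r) :
    (W q r).Nonempty ↔ (¬ q ∣ normk q r ∧ maxr q r ≤ absq q r) := by
  rcases Nat.lt_or_ge q 2 with h | h
  · have hq1 : q = 1 := by omega
    subst hq1
    constructor
    · rintro ⟨δ, -, hqc, -⟩
      exact absurd (one_dvd _) hqc
    · rintro ⟨h1, -⟩
      exact absurd (one_dvd _) h1
  · constructor
    · rintro ⟨δ, hmem, hqc⟩
      obtain ⟨h1, h2⟩ := forward_dir q h r δ hmem hqc
      exact ⟨h1, by rw [← hr]; exact h2⟩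
    · rintro ⟨h1, h2⟩
      refine backward_dir q h (normk q r) r rfl h1 ?_ ?_
      · intro i hi
        have hib := Finset.mem_Ico.mp hi
        have h3 : r i ≤ maxr q r := Finset.le_sup (Finset.mem_Ico.mpr ⟨by omega, hib.2⟩)
        rw [hr]; exact h3
      · rw [hr]; exact h2
end

section
/- Let q be a positive integer and r = (r₁,…,r_{q−1}) ∈ ℕ₀^{q−1} with r₁ = max r. If 𝒲^{(q)}_r ≠ ∅, then max r ≤ |r|_q. -/
open Finset

/-- Key lemma: if all parts are `< q` and no shifted partial sum is divisible by `q`,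
then the total is at most `q * (#parts ≥ 2) + (q - 1)`. -/
lemma key (q : ℕ) (hq : 0 < q) (δ : List ℕ) : ∀ (c : ℕ), c < q →
    (∀ x ∈ δ, x < q) →
    (∀ j, 1 ≤ j → j ≤ δ.length → ¬ q ∣ c + (δ.take j).sum) →
    c + δ.sum ≤ q * δ.countP (fun x => 2 ≤ x) + (q - 1) := by
  induction δ with
  | nil => intro c hc _ _; simpa using by omega
  | cons a t ih =>
    intro c hc hlt hdiv
    have ha : a < q := hlt a (by simp)
    have h1 : ¬ q ∣ c + a := by
      have := hdiv 1 le_rfl (by simp)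
      simpa using this
    have hm := Nat.div_add_mod (c + a) q
    have hc' : (c + a) % q < q := Nat.mod_lt _ hq
    have IH := ih ((c + a) % q) hc' (fun x hx => hlt x (List.mem_cons_of_mem _ hx))
      (fun j hj hjle => by
        intro hdvd
        apply hdiv (j + 1) (by omega) (by simpa using Nat.succ_le_succ hjle)
        have heq : c + ((a :: t).take (j + 1)).sum
            = q * ((c + a) / q) + ((c + a) % q + (t.take j).sum) := by
          simp only [List.take_succ_cons, List.sum_cons]
          omega
        rw [heq]
        exact Nat.dvd_add (Dvd.intro _ rfl) hdvd)
    have hstep : c + a ≤ (c + a) % q + (if (2:ℕ) ≤ a then q else 0) := by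
      by_cases hlt2 : c + a < q
      · rw [Nat.mod_eq_of_lt hlt2]; omega
      · have ha2 : 2 ≤ a := by
          by_contra hcon
          have : c + a = q := by omega
          exact h1 (this ▸ dvd_refl q)
        have : (c + a) % q = c + a - q := by
          rw [Nat.mod_eq_sub_mod (by omega), Nat.mod_eq_of_lt (by omega)]
        simp [ha2]; omega
    rw [List.countP_cons, List.sum_cons]
    by_cases ha2 : 2 ≤ a
    · simp only [if_pos ha2] at hstep
      simp only [ha2, decide_true, if_true]
      have hmul : q * (List.countP (fun x => decide (2 ≤ x)) t + 1)
          = q * List.countP (fun x => decide (2 ≤ x)) t + q := by ring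
      omega
    · simp only [if_neg ha2] at hstep
      have hd : (decide (2 ≤ a)) = false := by simpa using ha2
      rw [hd]
      simp
      omega

/-- Lemma 1, forward direction: if `r₁ = max r` and `𝒲^{(q)}_r ≠ ∅` then
`max r ≤ |r|_q`. -/
theorem stmt8 (q : ℕ) (hq : 0 < q) (r : ℕ → ℕ) (hr : r 1 = maxr q r)
    (h : (W q r).Nonempty) : maxr q r ≤ absq q r := by
  obtain ⟨δ, hmu, hqc⟩ := h
  rcases Nat.lt_or_ge q 2 with hq1 | hq2
  · interval_cases q
    exact absurd (one_dvd _) hqc.1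
  -- parts are < q
  have hlt : ∀ x ∈ δ, x < q := by
    intro x hx
    have hx' : x ∈ (↑δ : Multiset ℕ) := by simpa using hx
    rw [hmu, muOf, Multiset.mem_sum] at hx'
    obtain ⟨i, hi, hxi⟩ := hx'
    rw [Multiset.eq_of_mem_replicate hxi]
    exact (mem_Ico.mp hi).2
  -- total sum
  have hsum : δ.sum = ∑ i ∈ Finset.Ico 1 q, r i * i := by
    have : (↑δ : Multiset ℕ).sum = (muOf q r).sum := by rw [hmu]
    rw [Multiset.sum_coe] at this
    rw [this, muOf, Multiset.sum_sum]
    simp [Multiset.sum_replicate, smul_eq_mul]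
  -- count of parts ≥ 2
  have hcount : δ.countP (fun x => 2 ≤ x) = ∑ i ∈ Finset.Ico 2 q, r i := by
    have h1 : Multiset.countP (fun x => 2 ≤ x) (↑δ : Multiset ℕ)
        = δ.countP (fun x => 2 ≤ x) := by
      rw [Multiset.coe_countP]
    rw [← h1, hmu, muOf, ← Multiset.coe_countPAddMonoidHom, map_sum]
    have h2 : ∀ i ∈ Finset.Ico 1 q,
        Multiset.countPAddMonoidHom (fun x => 2 ≤ x) (Multiset.replicate (r i) i)
          = if 2 ≤ i then r i else 0 := by
      intro i _
      rw [Multiset.coe_countPAddMonoidHom, ← Multiset.coe_replicate,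
        Multiset.coe_countP, List.countP_replicate]
      by_cases h : 2 ≤ i <;> simp [h]
    rw [Finset.sum_congr rfl h2]
    rw [Finset.sum_eq_sum_Ico_succ_bot (by omega : 1 < q)]
    simp only [show ¬ (2:ℕ) ≤ 1 by omega, if_false, zero_add]
    refine Finset.sum_congr rfl fun i hi => ?_
    rw [if_pos (mem_Ico.mp hi).1]
  have hkey := key q hq δ 0 hq hlt (by simpa using hqc.2)
  rw [hsum, hcount] at hkey
  -- split off the i = 1 term
  rw [Finset.sum_eq_sum_Ico_succ_bot (by omega : 1 < q)] at hkey
  simp only [mul_one, zero_add] at hkey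
  -- arithmetic
  have hsplit : ∑ i ∈ Finset.Ico 2 q, q * r i
      = ∑ i ∈ Finset.Ico 2 q, (q - i) * r i + ∑ i ∈ Finset.Ico 2 q, r i * i := by
    rw [← Finset.sum_add_distrib]
    refine Finset.sum_congr rfl fun i hi => ?_
    have := (mem_Ico.mp hi).2
    have := (mem_Ico.mp hi).1
    nlinarith [Nat.sub_add_cancel (le_of_lt (mem_Ico.mp hi).2)]
  rw [Finset.mul_sum] at hkey
  have h2eq : (1:ℕ) + 1 = 2 := rfl
  rw [h2eq] at hkey
  rw [← hr, absq]
  omega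
end

section
/- Let q be a positive integer and r = (r₁,…,r_{q−1}) ∈ ℕ₀^{q−1} with r₁ = max r. If q ∤ ‖r‖ and max r ≤ |r|_q, then there exists a q'-cumulative composition in 𝒲^{(q)}_r, i.e., 𝒲^{(q)}_r ≠ ∅. -/
open Finset

/-! ### Auxiliary machinery for the greedy construction -/

/-- Main invariant for the greedy construction. -/
def MainInv (q s : ℕ) (M : Multiset ℕ) : Prop :=
  ¬ q ∣ (s + M.sum) ∧
    s + M.sum < q * ((M.filter (fun x => 2 ≤ x)).card + 1) ∧
    ∀ v, 2 ≤ v → M.count v ≤ M.count 1 + 1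

/-- Special (exceptional) invariant for the greedy construction. -/
def SpecInv (q s : ℕ) (M : Multiset ℕ) : Prop :=
  ¬ q ∣ (s + M.sum) ∧ ∃ w, 2 ≤ w ∧ (s + w) % q = 1 ∧
    M.count w = M.count 1 + 2 ∧ ∀ v, 2 ≤ v → v ≠ w → M.count v = 0

lemma aux_not_dvd {q t : ℕ} (h0 : 0 < t) (hne : t ≠ q) (h2 : t < 2 * q) : ¬ q ∣ t := by
  rintro ⟨k, rfl⟩
  rcases Nat.lt_or_ge k 2 with h | h
  · interval_cases k <;> simp_all
  · have : q * 2 ≤ q * k := Nat.mul_le_mul_left q h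
    linarith

lemma aux_dvd_mod (q x t : ℕ) : q ∣ (x % q + t) ↔ q ∣ (x + t) := by
  have h0 : q * (x / q) + x % q = x := Nat.div_add_mod x q
  have key : x + t = q * (x / q) + (x % q + t) := by
    rw [← add_assoc, h0]
  rw [key, Nat.dvd_add_right (Dvd.intro _ rfl)]

lemma aux_sum_bound (q σ : ℕ) :
    ∀ S : Multiset ℕ, (∀ x ∈ S, x + σ ≤ q) → S.sum + σ * Multiset.card S ≤ q * Multiset.card S := by
  intro S
  induction S using Multiset.induction_on with
  | empty => intro _; simp
  | cons x S ih =>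
    intro h
    have hx := h x (Multiset.mem_cons_self _ _)
    have ihh := ih (fun y hy => h y (Multiset.mem_cons_of_mem hy))
    simp only [Multiset.sum_cons, Multiset.card_cons]
    have e1 : σ * (Multiset.card S + 1) = σ * Multiset.card S + σ := by ring
    have e2 : q * (Multiset.card S + 1) = q * Multiset.card S + q := by ring
    rw [e1, e2]
    linarith

lemma aux_count_le (w : ℕ) (hw : 2 ≤ w) (M : Multiset ℕ) :
    M.count w ≤ Multiset.card (M.filter (fun x => 2 ≤ x)) := by
  have h1 : M.count w = (M.filter (fun x => 2 ≤ x)).count w := by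
    rw [Multiset.count_filter]
    simp [hw]
  rw [h1]
  exact Multiset.count_le_card _ _

lemma aux_sum_split (M : Multiset ℕ) (h : ∀ x ∈ M, 1 ≤ x) :
    M.sum = M.count 1 + (M.filter (fun x => 2 ≤ x)).sum := by
  have e := Multiset.filter_add_not (fun x => 2 ≤ x) M
  have h1 : ∀ x ∈ M.filter (fun x => ¬ 2 ≤ x), x = 1 := by
    intro x hx
    have hm := Multiset.mem_filter.mp hx
    have := h x hm.1
    have := hm.2
    omega
  have h2 : (M.filter (fun x => ¬ 2 ≤ x)).sum
      = Multiset.card (M.filter (fun x => ¬ 2 ≤ x)) := by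
    have := (Multiset.eq_replicate_card (a := 1)
      (s := M.filter (fun x => ¬ 2 ≤ x))).mpr h1
    rw [this]
    simp [Multiset.sum_replicate]
  have h3 : Multiset.card (M.filter (fun x => ¬ 2 ≤ x)) = M.count 1 := by
    rw [Multiset.count_eq_card_filter_eq]
    congr 1
    apply Multiset.filter_congr
    intro x hx
    have := h x hx
    constructor
    · intro hh; omega
    · intro hh; omega
  calc M.sum = ((M.filter (fun x => 2 ≤ x)) + (M.filter (fun x => ¬ 2 ≤ x))).sum := by rw [e]
    _ = (M.filter (fun x => 2 ≤ x)).sum + (M.filter (fun x => ¬ 2 ≤ x)).sum := by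
        rw [Multiset.sum_add]
    _ = M.count 1 + (M.filter (fun x => 2 ≤ x)).sum := by rw [h2, h3]; ring



lemma aux_sum_erase {M : Multiset ℕ} {v : ℕ} (h : v ∈ M) :
    v + (M.erase v).sum = M.sum := by
  have := congrArg Multiset.sum (Multiset.cons_erase h)
  rwa [Multiset.sum_cons] at this

lemma aux_step (q s : ℕ) (M : Multiset ℕ) (hq : 2 ≤ q) (hs : s < q)
    (hb : ∀ x ∈ M, 1 ≤ x ∧ x < q) (hM : M ≠ 0)
    (h : MainInv q s M ∨ SpecInv q s M) :
    ∃ v ∈ M, ¬ q ∣ (s + v) ∧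
      (MainInv q ((s + v) % q) (M.erase v) ∨ SpecInv q ((s + v) % q) (M.erase v)) := by
  rcases h with hMain | hSpec
  case inr =>
    -- Special case: M consists of ones and copies of w, count w = count 1 + 2,
    -- (s+w) % q = 1.  Play w.
    obtain ⟨hdv, w, hw2, hmod, hcnt, hoth⟩ := hSpec
    have hwM : w ∈ M := by
      rw [← Multiset.count_pos]; omega
    have hsum := aux_sum_erase hwM
    have hleg : ¬ q ∣ (s + w) := by
      intro hd
      obtain ⟨k, hk⟩ := hd
      rw [hk, Nat.mul_mod_right] at hmod
      omega
    refine ⟨w, hwM, hleg, Or.inl ?_⟩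
    have hc1 : (M.erase w).count 1 = M.count 1 :=
      Multiset.count_erase_of_ne (by omega) M
    have hcw : (M.erase w).count w = M.count w - 1 := Multiset.count_erase_self w M
    have hbM' : ∀ x ∈ M.erase w, 1 ≤ x ∧ x < q :=
      fun x hx => hb x (Multiset.mem_of_mem_erase hx)
    refine ⟨?_, ?_, ?_⟩
    · rw [aux_dvd_mod, add_assoc, hsum]
      exact hdv
    · rw [hmod]
      have hsplit := aux_sum_split (M.erase w) (fun x hx => (hbM' x hx).1)
      have hwB := aux_count_le w hw2 (M.erase w)
      have hSb := aux_sum_bound q 1 ((M.erase w).filter (fun x => 2 ≤ x))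
        (fun x hx => by
          have hxq := (hbM' x (Multiset.mem_filter.mp hx).1).2
          omega)
      have e : q * (Multiset.card ((M.erase w).filter (fun x => 2 ≤ x)) + 1)
          = q * Multiset.card ((M.erase w).filter (fun x => 2 ≤ x)) + q := by ring
      rw [e]
      have h1B : 1 * Multiset.card ((M.erase w).filter (fun x => 2 ≤ x))
          = Multiset.card ((M.erase w).filter (fun x => 2 ≤ x)) := by ring
      rw [h1B] at hSb
      have hcw' : (M.erase w).count w = M.count 1 + 1 := by omega
      linarith
    · intro v hv2
      by_cases hvw : v = w
      · subst hvw; omega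
      · have h0 := hoth v hv2 hvw
        have hcv : (M.erase w).count v = M.count v :=
          Multiset.count_erase_of_ne hvw M
        omega
  case inl =>
    obtain ⟨h1, h2, h3⟩ := hMain
    by_cases hT1 : ∃ v ∈ M, 2 ≤ v ∧ q < s + v
    · -- a crossing big part exists: play it
      obtain ⟨v, hvM, hv2, hvq⟩ := hT1
      have hvlt : v < q := (hb v hvM).2
      have hsum := aux_sum_erase hvM
      refine ⟨v, hvM, aux_not_dvd (by omega) (by omega) (by omega), Or.inl ?_⟩
      have hmod : (s + v) % q = s + v - q := by
        rw [Nat.mod_eq_sub_mod (by omega), Nat.mod_eq_of_lt (by omega)]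
      have hfil : v ::ₘ (M.erase v).filter (fun x => 2 ≤ x) = M.filter (fun x => 2 ≤ x) := by
        have := congrArg (Multiset.filter (fun x => 2 ≤ x)) (Multiset.cons_erase hvM)
        rwa [Multiset.filter_cons_of_pos _ hv2] at this
      refine ⟨?_, ?_, ?_⟩
      · rw [aux_dvd_mod, add_assoc, hsum]
        exact h1
      · rw [hmod]
        rw [← hfil, Multiset.card_cons] at h2
        have e : q * (Multiset.card ((M.erase v).filter (fun x => 2 ≤ x)) + 1 + 1)
            = q * (Multiset.card ((M.erase v).filter (fun x => 2 ≤ x)) + 1) + q := by ring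
        rw [e, ← hsum] at h2
        have hx : s + (v + (M.erase v).sum) = s + v - q + (M.erase v).sum + q := by omega
        rw [hx] at h2
        linarith
      · intro u hu2
        have := h3 u hu2
        have hc1 : (M.erase v).count 1 = M.count 1 :=
          Multiset.count_erase_of_ne (by omega) M
        have hcu := Multiset.count_le_of_le u (Multiset.erase_le v M)
        omega
    · push_neg at hT1
      -- hT1 : ∀ v ∈ M, 2 ≤ v → s + v ≤ q
      by_cases ha : M.count 1 = 0
      · -- no ones left
        by_cases hex : ∃ v ∈ M, s + v ≠ q
        · obtain ⟨v, hvM, hvne⟩ := hex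
          have hv1 : 1 ≤ v := (hb v hvM).1
          have hvn1 : v ≠ 1 := by
            intro he
            rw [he] at hvM
            have := Multiset.count_pos.mpr hvM
            omega
          have hv2 : 2 ≤ v := by omega
          have hvle := hT1 v hvM hv2
          have hvlt : s + v < q := by omega
          have hsum := aux_sum_erase hvM
          refine ⟨v, hvM, aux_not_dvd (by omega) (by omega) (by omega), Or.inl ?_⟩
          have hmod : (s + v) % q = s + v := Nat.mod_eq_of_lt hvlt
          have hc1' : (M.erase v).count 1 = 0 := by
            have := Multiset.count_le_of_le 1 (Multiset.erase_le v M)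
            omega
          have hall2 : ∀ x ∈ M.erase v, 2 ≤ x := by
            intro x hx
            have hx1 := (hb x (Multiset.mem_of_mem_erase hx)).1
            have : x ≠ 1 := by
              intro he
              rw [he] at hx
              have := Multiset.count_pos.mpr hx
              omega
            omega
          have hfeq : (M.erase v).filter (fun x => 2 ≤ x) = M.erase v :=
            Multiset.filter_eq_self.mpr hall2
          refine ⟨?_, ?_, ?_⟩
          · rw [aux_dvd_mod, add_assoc, hsum]
            exact h1
          · rw [hmod, hfeq]
            have hbnd := aux_sum_bound q 1 (M.erase v)
              (fun x hx => by
                have := (hb x (Multiset.mem_of_mem_erase hx)).2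
                omega)
            have e : q * (Multiset.card (M.erase v) + 1) = q * Multiset.card (M.erase v) + q := by
              ring
            rw [e]
            have h1B : 1 * Multiset.card (M.erase v) = Multiset.card (M.erase v) := by ring
            rw [h1B] at hbnd
            linarith
          · intro u hu2
            have := h3 u hu2
            have hcu := Multiset.count_le_of_le u (Multiset.erase_le v M)
            omega
        · -- all parts v have s + v = q: contradiction
          exfalso
          push_neg at hex
          obtain ⟨v0, hv0⟩ := Multiset.exists_mem_of_ne_zero hM
          have hcardcnt : M.count v0 = Multiset.card M :=
            Multiset.count_eq_card.mpr (fun b hb' => by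
              have := hex b hb'
              have := hex v0 hv0
              omega)
          have hv01 : 1 ≤ v0 := (hb v0 hv0).1
          have hv0n1 : v0 ≠ 1 := by
            intro he
            rw [he] at hv0
            have := Multiset.count_pos.mpr hv0
            omega
          have hv02 : 2 ≤ v0 := by omega
          have hc := h3 v0 hv02
          have hpos := Multiset.count_pos.mpr hv0
          have hcard1 : Multiset.card M = 1 := by omega
          obtain ⟨x, hx⟩ := Multiset.card_eq_one.mp hcard1
          have hxM : x ∈ M := by rw [hx]; exact Multiset.mem_singleton_self x
          have hsx := hex x hxM
          have hsM : M.sum = x := by rw [hx]; simp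
          exact h1 (by rw [hsM, hsx])
      · -- at least one 1 left
        have haM : (1:ℕ) ∈ M := by
          rw [← Multiset.count_pos]; omega
        have hsum1 := aux_sum_erase haM
        have hc11 : (M.erase 1).count 1 = M.count 1 - 1 := Multiset.count_erase_self 1 M
        have hfil1 : (M.erase 1).filter (fun x => 2 ≤ x) = M.filter (fun x => 2 ≤ x) := by
          have := congrArg (Multiset.filter (fun x => 2 ≤ x)) (Multiset.cons_erase haM)
          rwa [Multiset.filter_cons_of_neg _ (by omega)] at this
        have hcountu : ∀ u : ℕ, u ≠ 1 → (M.erase 1).count u = M.count u :=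
          fun u hu => Multiset.count_erase_of_ne hu M
        by_cases hs1 : s + 1 < q
        · by_cases hmm : ∀ v, 2 ≤ v → M.count v ≤ M.count 1
          · -- play a 1
            refine ⟨1, haM, aux_not_dvd (by omega) (by omega) (by omega), Or.inl ?_⟩
            have hmod : (s + 1) % q = s + 1 := Nat.mod_eq_of_lt hs1
            refine ⟨?_, ?_, ?_⟩
            · rw [aux_dvd_mod, add_assoc, hsum1]
              exact h1
            · rw [hmod, hfil1]
              rw [← hsum1] at h2
              have hx : s + (1 + (M.erase 1).sum) = s + 1 + (M.erase 1).sum := by omega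
              rw [hx] at h2
              exact h2
            · intro u hu2
              have := hmm u hu2
              have hcu := hcountu u (by omega)
              omega
          · push_neg at hmm
            obtain ⟨w, hw2, hwgt⟩ := hmm
            have hw : M.count w = M.count 1 + 1 := by
              have := h3 w hw2
              omega
            have hwM : w ∈ M := by rw [← Multiset.count_pos]; omega
            by_cases hu : ∃ u ∈ M, 2 ≤ u ∧ s + u < q
            · -- play a legal non-crossing big part
              obtain ⟨u, huM, hu2, hult⟩ := hu
              have hsum := aux_sum_erase huM
              refine ⟨u, huM, aux_not_dvd (by omega) (by omega) (by omega), Or.inl ?_⟩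
              have hmod : (s + u) % q = s + u := Nat.mod_eq_of_lt hult
              have hbM' : ∀ x ∈ M.erase u, 1 ≤ x ∧ x < q :=
                fun x hx => hb x (Multiset.mem_of_mem_erase hx)
              have hsplit := aux_sum_split (M.erase u) (fun x hx => (hbM' x hx).1)
              have hc1' : (M.erase u).count 1 = M.count 1 :=
                Multiset.count_erase_of_ne (by omega) M
              have hcw' : M.count 1 ≤ (M.erase u).count w := by
                by_cases hwu : w = u
                · subst hwu
                  have := Multiset.count_erase_self w M
                  omega
                · have := Multiset.count_erase_of_ne hwu M (b := u)
                  omega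
              have hwB := aux_count_le w hw2 (M.erase u)
              have hσ : 0 < max s 1 := by omega
              have hbig : ∀ x ∈ (M.erase u).filter (fun x => 2 ≤ x), x + max s 1 ≤ q := by
                intro x hx
                obtain ⟨hxM', hx2⟩ := Multiset.mem_filter.mp hx
                have hxq := (hbM' x hxM').2
                have hxM : x ∈ M := Multiset.mem_of_mem_erase hxM'
                have := hT1 x hxM hx2
                omega
              have hSb := aux_sum_bound q (max s 1) _ hbig
              have hB'le : Multiset.card ((M.erase u).filter (fun x => 2 ≤ x))
                  ≤ max s 1 * Multiset.card ((M.erase u).filter (fun x => 2 ≤ x)) :=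
                Nat.le_mul_of_pos_left _ hσ
              refine ⟨?_, ?_, ?_⟩
              · rw [aux_dvd_mod, add_assoc, hsum]
                exact h1
              · rw [hmod]
                have e : q * (Multiset.card ((M.erase u).filter (fun x => 2 ≤ x)) + 1)
                    = q * Multiset.card ((M.erase u).filter (fun x => 2 ≤ x)) + q := by ring
                rw [e]
                linarith
              · intro x hx2
                have := h3 x hx2
                have hcx := Multiset.count_le_of_le x (Multiset.erase_le u M)
                omega
            · -- all big parts land exactly on the multiple: play a 1, go to Spec
              push_neg at hu
              have hsw : s + w = q := by
                have h1' := hT1 w hwM hw2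
                have h2' := hu w hwM hw2
                omega
              refine ⟨1, haM, aux_not_dvd (by omega) (by omega) (by omega), Or.inr ?_⟩
              have hmod : (s + 1) % q = s + 1 := Nat.mod_eq_of_lt hs1
              refine ⟨?_, w, hw2, ?_, ?_, ?_⟩
              · rw [aux_dvd_mod, add_assoc, hsum1]
                exact h1
              · rw [hmod]
                have hx : s + 1 + w = q + 1 := by omega
                rw [hx, Nat.add_mod_left]
                exact Nat.mod_eq_of_lt (by omega)
              · have hcw := hcountu w (by omega)
                omega
              · intro v hv2 hvw
                have hcv := hcountu v (by omega)
                have : M.count v = 0 := by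
                  by_contra hc
                  have hvM : v ∈ M := by rw [← Multiset.count_pos]; omega
                  have := hT1 v hvM hv2
                  have := hu v hvM hv2
                  exact hvw (by omega)
                omega
        · -- s = q - 1 and a one is present: contradiction
          exfalso
          have hnb : M.filter (fun x => 2 ≤ x) = 0 := by
            rw [Multiset.filter_eq_nil]
            intro x hx hx2
            have := hT1 x hx hx2
            omega
          have hsplit := aux_sum_split M (fun x hx => (hb x hx).1)
          rw [hnb] at hsplit
          simp at hsplit
          rw [hnb] at h2
          simp at h2
          omega


lemma aux_build (q : ℕ) (hq : 2 ≤ q) :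
    ∀ (n : ℕ) (M : Multiset ℕ) (s : ℕ), Multiset.card M = n → s < q →
      (∀ x ∈ M, 1 ≤ x ∧ x < q) → (MainInv q s M ∨ SpecInv q s M) →
      ∃ δ : List ℕ, (δ : Multiset ℕ) = M ∧
        ∀ j, 1 ≤ j → j ≤ δ.length → ¬ q ∣ (s + (δ.take j).sum) := by
  intro n
  induction n using Nat.strong_induction_on with
  | _ n ih =>
    intro M s hcard hs hb h
    by_cases hM : M = 0
    · refine ⟨[], by simp [hM], ?_⟩
      intro j hj1 hj2
      simp at hj2
      omega
    · obtain ⟨v, hvM, hleg, hC⟩ := aux_step q s M hq hs hb hM h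
      have hn : 0 < n := by
        rw [← hcard]
        exact Multiset.card_pos.mpr hM
      have hcard' : Multiset.card (M.erase v) = n - 1 := by
        rw [Multiset.card_erase_of_mem hvM, hcard]
        rfl
      have hb' : ∀ x ∈ M.erase v, 1 ≤ x ∧ x < q :=
        fun x hx => hb x (Multiset.mem_of_mem_erase hx)
      have hs' : (s + v) % q < q := Nat.mod_lt _ (by omega)
      obtain ⟨δ', hδc, hδ⟩ := ih (n - 1) (by omega) (M.erase v) ((s + v) % q) hcard' hs' hb' hC
      refine ⟨v :: δ', ?_, ?_⟩
      · show ((v :: δ' : List ℕ) : Multiset ℕ) = M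
        rw [← Multiset.cons_coe, hδc, Multiset.cons_erase hvM]
      · intro j hj1 hj2
        rcases j with _ | j'
        · omega
        · simp only [List.take_succ_cons, List.sum_cons]
          rcases Nat.eq_zero_or_pos j' with rfl | hj'
          · simpa using hleg
          · have hh := hδ j' hj' (by simpa using hj2)
            rw [aux_dvd_mod] at hh
            rw [show s + (v + (List.take j' δ').sum) = s + v + (List.take j' δ').sum from by ring]
            exact hh

lemma aux_fin_msum (s : Finset ℕ) (f : ℕ → Multiset ℕ) :
    (∑ i ∈ s, f i).sum = ∑ i ∈ s, (f i).sum := by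
  classical
  induction s using Finset.cons_induction with
  | empty => simp
  | cons a s ha ih => rw [Finset.sum_cons, Finset.sum_cons, Multiset.sum_add, ih]

lemma aux_fin_count (v : ℕ) (s : Finset ℕ) (f : ℕ → Multiset ℕ) :
    (∑ i ∈ s, f i).count v = ∑ i ∈ s, (f i).count v := by
  classical
  induction s using Finset.cons_induction with
  | empty => simp
  | cons a s ha ih => rw [Finset.sum_cons, Finset.sum_cons, Multiset.count_add, ih]

lemma aux_fin_filtercard (p : ℕ → Prop) [DecidablePred p] (s : Finset ℕ) (f : ℕ → Multiset ℕ) :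
    Multiset.card ((∑ i ∈ s, f i).filter p) = ∑ i ∈ s, Multiset.card ((f i).filter p) := by
  classical
  induction s using Finset.cons_induction with
  | empty => simp
  | cons a s ha ih => rw [Finset.sum_cons, Finset.sum_cons, Multiset.filter_add, Multiset.card_add, ih]

lemma aux_mem_fin_sum {x : ℕ} {s : Finset ℕ} {f : ℕ → Multiset ℕ}
    (h : x ∈ ∑ i ∈ s, f i) : ∃ i ∈ s, x ∈ f i := by
  classical
  induction s using Finset.cons_induction with
  | empty => simp at h
  | cons a s ha ih =>
    rw [Finset.sum_cons, Multiset.mem_add] at h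
    rcases h with h | h
    · exact ⟨a, Finset.mem_cons_self a s, h⟩
    · obtain ⟨i, hi, hx⟩ := ih h
      exact ⟨i, Finset.mem_cons_of_mem hi, hx⟩

lemma aux_filter_replicate_card (p : ℕ → Prop) [DecidablePred p] (n i : ℕ) :
    Multiset.card ((Multiset.replicate n i).filter p) = if p i then n else 0 := by
  induction n with
  | zero => simp
  | succ n ih =>
    rw [Multiset.replicate_succ, Multiset.filter_cons]
    by_cases hp : p i <;> simp [hp, ih]

/-- Lemma 1, converse direction: if `r₁ = max r`, `q ∤ ‖r‖` and
`max r ≤ |r|_q`, then `𝒲^{(q)}_r ≠ ∅`. -/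
theorem stmt9 (q : ℕ) (hq : 0 < q) (r : ℕ → ℕ) (hr : r 1 = maxr q r)
    (hdvd : ¬ q ∣ normk q r) (hle : maxr q r ≤ absq q r) :
    (W q r).Nonempty := by
  classical
  have hq2 : 2 ≤ q := by
    by_contra hcon
    have hq1 : q = 1 := by omega
    subst hq1
    exact hdvd (one_dvd _)
  set M0 := muOf q r with hM0
  -- counts
  have hcount : ∀ v, M0.count v = if v ∈ Finset.Ico 1 q then r v else 0 := by
    intro v
    rw [hM0]
    unfold muOf
    rw [aux_fin_count]
    simp only [Multiset.count_replicate]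
    rw [Finset.sum_ite_eq' (Finset.Ico 1 q) v r]
  have hcnt1 : M0.count 1 = r 1 := by
    rw [hcount, if_pos (Finset.mem_Ico.mpr ⟨le_refl 1, by omega⟩)]
  -- sum
  have hsum0 : M0.sum = normk q r := by
    rw [hM0]
    unfold muOf normk
    rw [aux_fin_msum]
    apply Finset.sum_congr rfl
    intro i _
    simp [Multiset.sum_replicate, Nat.mul_comm]
  -- element bounds
  have hbinit : ∀ x ∈ M0, 1 ≤ x ∧ x < q := by
    intro x hx
    obtain ⟨i, hi, hxi⟩ := aux_mem_fin_sum hx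
    have := Multiset.eq_of_mem_replicate hxi
    subst this
    have := Finset.mem_Ico.mp hi
    omega
  -- cardinality of big parts
  have hB0 : Multiset.card (M0.filter (fun x => 2 ≤ x)) = ∑ i ∈ Finset.Ico 2 q, r i := by
    rw [hM0]
    unfold muOf
    rw [aux_fin_filtercard]
    have h1 : ∀ i ∈ Finset.Ico 1 q,
        Multiset.card ((Multiset.replicate (r i) i).filter (fun x => 2 ≤ x))
          = if 2 ≤ i then r i else 0 := fun i _ => aux_filter_replicate_card _ _ _
    rw [Finset.sum_congr rfl h1]
    rw [← Finset.sum_filter]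
    congr 1
    ext i
    simp only [Finset.mem_filter, Finset.mem_Ico]
    omega
  have hsup : ∀ v ∈ Finset.Ico 1 q, r v ≤ r 1 := by
    intro v hv
    rw [hr]
    exact Finset.le_sup hv
  -- the three invariant conditions at the start
  have hmain : MainInv q 0 M0 := by
    refine ⟨?_, ?_, ?_⟩
    · rw [hsum0, zero_add]
      exact hdvd
    · rw [hsum0, zero_add, hB0]
      -- normk < q * (B0 + 1)
      have hsplit : normk q r = 1 * r 1 + ∑ i ∈ Finset.Ico 2 q, i * r i := by
        unfold normk
        rw [Finset.sum_eq_sum_Ico_succ_bot (by omega : 1 < q)]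
      have habs : r 1 ≤ (q - 1) + ∑ i ∈ Finset.Ico 2 q, (q - i) * r i := by
        have := hle
        unfold absq at this
        rw [← hr] at this
        exact this
      have hcomb : ∑ i ∈ Finset.Ico 2 q, (q - i) * r i + ∑ i ∈ Finset.Ico 2 q, i * r i
          = q * ∑ i ∈ Finset.Ico 2 q, r i := by
        rw [← Finset.sum_add_distrib, Finset.mul_sum]
        apply Finset.sum_congr rfl
        intro i hi
        have hmem := Finset.mem_Ico.mp hi
        have he : q - i + i = q := by omega
        calc (q - i) * r i + i * r i = (q - i + i) * r i := by ring
          _ = q * r i := by rw [he]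
      have e : q * (∑ i ∈ Finset.Ico 2 q, r i + 1) = q * ∑ i ∈ Finset.Ico 2 q, r i + q := by
        ring
      rw [e]
      have h1r : 1 * r 1 = r 1 := by ring
      have hq1 : q - 1 + 1 = q := by omega
      linarith [hsplit, habs, hcomb]
    · intro v hv2
      rw [hcnt1, hcount]
      by_cases hvm : v ∈ Finset.Ico 1 q
      · simp only [hvm, if_true]
        have := hsup v hvm
        omega
      · simp only [hvm, if_false]
        omega
  obtain ⟨δ, hδc, hδ⟩ := aux_build q hq2 (Multiset.card M0) M0 0 rfl (by omega) hbinit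
    (Or.inl hmain)
  refine ⟨δ, hδc, ?_, ?_⟩
  · have hsl : δ.sum = normk q r := by
      have : (δ : Multiset ℕ).sum = M0.sum := by rw [hδc]
      rw [Multiset.sum_coe] at this
      rw [this, hsum0]
    rw [hsl]
    exact hdvd
  · intro j hj1 hj2
    have := hδ j hj1 hj2
    simpa using this
end

section
/- Let q be a positive integer, a multiplicatively invertible in ℤ/qℤ, and r = (r₁,…,r_{q−1}) ∈ ℕ₀^{q−1}. The map φ sending δ = (δ₁,…,δ_s) ∈ 𝒲^{(q)}_r to δ′ = (δ′₁,…,δ′_s), where 1 ≤ δ′_t ≤ q−1 and δ′_t ≡ a·δ_t (mod q) for all 1 ≤ t ≤ s, is a well-defined bijection from 𝒲^{(q)}_r onto 𝒲^{(q)}_{ᵃr}. -/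
open Finset

lemma fmem {q a i : ℕ} (ha : Nat.Coprime a q) (h1 : 1 ≤ i) (h2 : i < q) :
    1 ≤ a * i % q ∧ a * i % q < q := by
  have hq : 0 < q := lt_of_le_of_lt (Nat.zero_le _) h2
  refine ⟨?_, Nat.mod_lt _ hq⟩
  rcases Nat.eq_zero_or_pos (a * i % q) with h | h
  · exfalso
    have hd : q ∣ a * i := Nat.dvd_of_mod_eq_zero h
    have : q ∣ i := Nat.Coprime.dvd_of_dvd_mul_left ha.symm hd
    have := Nat.le_of_dvd (by omega) this
    omega
  · exact h

lemma cancelmod {q : ℕ} (a b : ℕ) (hab : a * b ≡ 1 [MOD q]) {x : ℕ} (h2 : x < q) :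
    b * (a * x % q) % q = x := by
  have h : b * (a * x % q) ≡ x [MOD q] := by
    calc b * (a * x % q) ≡ b * (a * x) [MOD q] := Nat.ModEq.mul_left b (Nat.mod_modEq _ q)
      _ = (a * b) * x := by ring
      _ ≡ 1 * x [MOD q] := Nat.ModEq.mul_right x hab
      _ = x := one_mul x
  have h' : b * (a * x % q) % q = x % q := h
  rwa [Nat.mod_eq_of_lt h2] at h'

lemma map_muOf (q a b : ℕ) (ha : Nat.Coprime a q) (hb : Nat.Coprime b q)
    (hab : a * b ≡ 1 [MOD q]) (r r' : ℕ → ℕ)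
    (hr' : ∀ i j, 1 ≤ i → i ≤ q - 1 → 1 ≤ j → j ≤ q - 1 →
      j % q = a * i % q → r' j = r i) :
    Multiset.map (fun x => a * x % q) (muOf q r) = muOf q r' := by
  unfold muOf
  rw [← Multiset.coe_mapAddMonoidHom, map_sum]
  simp only [Multiset.coe_mapAddMonoidHom, Multiset.map_replicate]
  refine Finset.sum_nbij' (fun i => a * i % q) (fun j => b * j % q) ?_ ?_ ?_ ?_ ?_
  · intro i hi
    rw [Finset.mem_Ico] at hi ⊢
    exact ⟨(fmem ha hi.1 hi.2).1, (fmem ha hi.1 hi.2).2⟩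
  · intro j hj
    rw [Finset.mem_Ico] at hj ⊢
    exact ⟨(fmem hb hj.1 hj.2).1, (fmem hb hj.1 hj.2).2⟩
  · intro i hi
    rw [Finset.mem_Ico] at hi
    exact cancelmod a b hab hi.2
  · intro j hj
    rw [Finset.mem_Ico] at hj
    exact cancelmod b a (by rwa [mul_comm] at hab) hj.2
  · intro i hi
    rw [Finset.mem_Ico] at hi
    have hf := fmem ha hi.1 hi.2
    congr 1
    exact (hr' i (a * i % q) hi.1 (by omega) hf.1 (by omega)
      (Nat.mod_mod_of_dvd _ dvd_rfl)).symm

lemma sum_map_mod_s11 (q a : ℕ) (l : List ℕ) :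
    (l.map fun x => a * x % q).sum ≡ a * l.sum [MOD q] := by
  induction l with
  | nil => simp only [List.map_nil, List.sum_nil, Nat.mul_zero]; exact Nat.ModEq.refl 0
  | cons x l ih =>
      simp only [List.map_cons, List.sum_cons, Nat.mul_add]
      exact (Nat.mod_modEq (a * x) q).add ih

lemma qcum_map (q a : ℕ) (ha : Nat.Coprime a q) {δ : List ℕ} (h : QCum q δ) :
    QCum q (δ.map fun x => a * x % q) := by
  obtain ⟨h0, hj⟩ := h
  have key : ∀ l : List ℕ, ¬ q ∣ l.sum → ¬ q ∣ (l.map fun x => a * x % q).sum := by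
    intro l hl hd
    apply hl
    have hme := sum_map_mod_s11 q a l
    have h1 : q ∣ a * l.sum :=
      (Nat.modEq_zero_iff_dvd).mp (hme.symm.trans ((Nat.modEq_zero_iff_dvd).mpr hd))
    exact Nat.Coprime.dvd_of_dvd_mul_left ha.symm h1
  constructor
  · exact key δ h0
  · intro j hj1 hj2
    rw [List.length_map] at hj2
    rw [← List.map_take]
    exact key _ (hj j hj1 hj2)

lemma mapsTo_W (q a b : ℕ) (ha : Nat.Coprime a q) (hb : Nat.Coprime b q)
    (hab : a * b ≡ 1 [MOD q]) (r r' : ℕ → ℕ)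
    (hr' : ∀ i j, 1 ≤ i → i ≤ q - 1 → 1 ≤ j → j ≤ q - 1 →
      j % q = a * i % q → r' j = r i) :
    ∀ δ ∈ W q r, (δ.map fun x => a * x % q) ∈ W q r' := by
  rintro δ ⟨hmul, hcum⟩
  refine ⟨?_, qcum_map q a ha hcum⟩
  rw [← Multiset.map_coe, hmul, map_muOf q a b ha hb hab r r' hr']


lemma comap_hr (q a b : ℕ) (hab : a * b ≡ 1 [MOD q]) (r r' : ℕ → ℕ)
    (hr' : ∀ i j, 1 ≤ i → i ≤ q - 1 → 1 ≤ j → j ≤ q - 1 →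
      j % q = a * i % q → r' j = r i) :
    ∀ i j, 1 ≤ i → i ≤ q - 1 → 1 ≤ j → j ≤ q - 1 →
      j % q = b * i % q → r j = r' i := by
  intro i j h1 h2 h3 h4 hj
  refine (hr' j i h3 h4 h1 h2 ?_).symm
  have hji : j ≡ b * i [MOD q] := hj
  have : i ≡ a * j [MOD q] := by
    calc i = 1 * i := (one_mul i).symm
      _ ≡ (a * b) * i [MOD q] := (Nat.ModEq.mul_right i hab).symm
      _ = a * (b * i) := by ring
      _ ≡ a * j [MOD q] := Nat.ModEq.mul_left a hji.symm
  exact this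

lemma mem_W_bound {q : ℕ} {r : ℕ → ℕ} {δ : List ℕ} (hδ : δ ∈ W q r) :
    ∀ x ∈ δ, 1 ≤ x ∧ x < q := by
  intro x hx
  have hx' : x ∈ (↑δ : Multiset ℕ) := hx
  rw [hδ.1] at hx'
  unfold muOf at hx'
  rw [Multiset.mem_sum] at hx'
  obtain ⟨i, hi, hxi⟩ := hx'
  rw [Multiset.eq_of_mem_replicate hxi]
  exact Finset.mem_Ico.mp hi

/-- The map `δ ↦ δ'` with `δ'_t` the unique element of `[1, q-1]` congruent to
`a·δ_t (mod q)` is a well-defined bijection `𝒲^{(q)}_r → 𝒲^{(q)}_{ᵃr}`.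
(For parts `x` of elements of `𝒲^{(q)}_r` one has `1 ≤ x ≤ q-1`, so this
image is exactly `a·x % q`.) -/
theorem stmt11 (q : ℕ) (hq : 0 < q) (a : ℕ) (ha : Nat.Coprime a q)
    (r r' : ℕ → ℕ)
    (hr' : ∀ i j, 1 ≤ i → i ≤ q - 1 → 1 ≤ j → j ≤ q - 1 →
      j % q = a * i % q → r' j = r i) :
    Set.BijOn (fun δ : List ℕ => δ.map fun x => a * x % q) (W q r) (W q r') := by
  set b := a ^ (Nat.totient q - 1) with hbdef
  have hb : Nat.Coprime b q := Nat.Coprime.pow_left _ ha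
  have hab : a * b ≡ 1 [MOD q] := by
    have ht : 1 ≤ Nat.totient q := Nat.totient_pos.mpr hq
    have : a * b = a ^ Nat.totient q := by
      rw [hbdef, ← pow_succ']
      congr 1
      omega
    rw [this]
    exact Nat.ModEq.pow_totient ha
  have hba : b * a ≡ 1 [MOD q] := by rwa [mul_comm] at hab
  have hr'' := comap_hr q a b hab r r' hr'
  refine ⟨mapsTo_W q a b ha hb hab r r' hr', ?_, ?_⟩
  · intro δ1 h1 δ2 h2 heq
    have key : ∀ δ ∈ W q r,
        ((δ.map fun x => a * x % q).map fun y => b * y % q) = δ := by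
      intro δ hδ
      rw [List.map_map]
      have : ∀ x ∈ δ, (b * (a * x % q) % q) = x := fun x hx =>
        cancelmod a b hab (mem_W_bound hδ x hx).2
      calc δ.map ((fun y => b * y % q) ∘ fun x => a * x % q)
          = δ.map id := List.map_congr_left this
        _ = δ := List.map_id δ
    calc δ1 = (δ1.map fun x => a * x % q).map fun y => b * y % q := (key δ1 h1).symm
      _ = (δ2.map fun x => a * x % q).map fun y => b * y % q := by simp only at heq; rw [heq]
      _ = δ2 := key δ2 h2
  · intro δ' hδ'
    refine ⟨δ'.map fun y => b * y % q, mapsTo_W q b a hb ha hba r' r hr'' δ' hδ', ?_⟩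
    show ((δ'.map fun y => b * y % q).map fun x => a * x % q) = δ'
    rw [List.map_map]
    have : ∀ x ∈ δ', (a * (b * x % q) % q) = x := fun x hx =>
      cancelmod b a hba (mem_W_bound hδ' x hx).2
    calc δ'.map ((fun x => a * x % q) ∘ fun y => b * y % q)
        = δ'.map id := List.map_congr_left this
      _ = δ' := List.map_id δ'
end

section
/- Let p be a prime number, λ a partition, and r(λ) = (r₁,…,r_{p−1}). Then c^{(p)}_λ ≠ 0 if and only if (i) p ∤ |λ| and (ii) for some index a with r_a = max r(λ), one has max r(λ) ≤ |ᵇr(λ)|_p, where 1 ≤ b ≤ p−1 satisfies ab ≡ 1 (mod p). -/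
open Finset

section Aux

variable {p : ℕ}

lemma castInj [NeZero p] {i j : ℕ} (hi : i < p) (hj : j < p) (h : (i : ZMod p) = j) : i = j := by
  have := congrArg ZMod.val h
  rwa [ZMod.val_cast_of_lt hi, ZMod.val_cast_of_lt hj] at this

/-- prefix-sum condition -/
def GoodL (l : List (ZMod p)) : Prop := ∀ j, 1 ≤ j → j ≤ l.length → (l.take j).sum ≠ 0

/-- the capacity function -/
def Fd (p : ℕ) (a : ZMod p) (N : Multiset (ZMod p)) : ℕ :=
  (p - 1) + ∑ j ∈ Finset.Ico 2 p, (p - j) * N.count (a * (j : ℕ))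

/-- scaled value map -/
def vmap (a : ZMod p) (N : Multiset (ZMod p)) : Multiset ℕ := N.map (fun z => (a⁻¹ * z).val)

variable [Fact p.Prime]

lemma count_vmap (a : ZMod p) (ha : a ≠ 0) (N : Multiset (ZMod p)) {j : ℕ} (hj : j < p) :
    (vmap a N).count j = N.count (a * (j : ℕ)) := by
  rw [vmap, Multiset.count_map, Multiset.count_eq_card_filter_eq]
  congr 1
  apply Multiset.filter_congr
  intro z _
  constructor
  · intro h
    have : ((j : ℕ) : ZMod p) = a⁻¹ * z := by
      rw [h, ZMod.natCast_val, ZMod.cast_id]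
    rw [this, ← mul_assoc, mul_inv_cancel₀ ha, one_mul]
  · intro h
    rw [← h, ← mul_assoc, inv_mul_cancel₀ ha, one_mul, ZMod.val_natCast, Nat.mod_eq_of_lt hj]

lemma vmap_mem (a : ZMod p) (N : Multiset (ZMod p)) (hN : ∀ z ∈ N, z ≠ 0) (ha : a ≠ 0) :
    ∀ e ∈ vmap a N, 1 ≤ e ∧ e < p := by
  intro e he
  rw [vmap, Multiset.mem_map] at he
  obtain ⟨z, hz, rfl⟩ := he
  refine ⟨?_, ZMod.val_lt _⟩
  have : a⁻¹ * z ≠ 0 := mul_ne_zero (inv_ne_zero ha) (hN z hz)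
  have := (ZMod.val_eq_zero (a⁻¹ * z)).not.mpr this
  omega

lemma vmap_card (a : ZMod p) (N : Multiset (ZMod p)) : (vmap a N).card = N.card :=
  Multiset.card_map _ _

lemma vmap_sum_cast (a : ZMod p) (ha : a ≠ 0) (N : Multiset (ZMod p)) :
    (((vmap a N).sum : ℕ) : ZMod p) = a⁻¹ * N.sum := by
  rw [vmap, Nat.cast_multiset_sum, Multiset.map_map]
  have : ((fun z : ZMod p => ((a⁻¹ * z).val : ZMod p)) ∘ id) = fun z => a⁻¹ * z := by
    funext z
    simp [ZMod.natCast_val, ZMod.cast_id]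
  rw [show Multiset.map ((Nat.cast : ℕ → ZMod p) ∘ fun z => (a⁻¹ * z).val) N
      = Multiset.map (fun z => a⁻¹ * z) N from Multiset.map_congr rfl (by
        intro z _; simp [ZMod.natCast_val, ZMod.cast_id])]
  rw [Multiset.sum_map_mul_left]
  simp

/-- sum and card of a nat multiset with entries in `[1, p)` -/
lemma natms_sum (w : Multiset ℕ) (hw : ∀ e ∈ w, 1 ≤ e ∧ e < p) :
    w.sum = ∑ j ∈ Finset.Ico 1 p, j * w.count j := by
  induction w using Multiset.induction_on with
  | empty => simp
  | cons e t ih =>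
    have he := hw e (Multiset.mem_cons_self _ _)
    have ht : ∀ x ∈ t, 1 ≤ x ∧ x < p := fun x hx => hw x (Multiset.mem_cons_of_mem hx)
    rw [Multiset.sum_cons, ih ht]
    have : ∀ j, (e ::ₘ t).count j = t.count j + if j = e then 1 else 0 := by
      intro j
      rw [Multiset.count_cons]
    simp_rw [this, Nat.mul_add, Finset.sum_add_distrib, mul_ite, mul_one, mul_zero]
    rw [Finset.sum_ite_eq' (Finset.Ico 1 p) e (fun j => j), if_pos (Finset.mem_Ico.mpr he)]
    ring

lemma natms_card (w : Multiset ℕ) (hw : ∀ e ∈ w, 1 ≤ e ∧ e < p) :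
    w.card = ∑ j ∈ Finset.Ico 1 p, w.count j := by
  rw [← Multiset.sum_count_eq_card]
  intro a ha
  exact Finset.mem_Ico.mpr (hw a ha)

lemma Ico1p_eq : Finset.Ico 1 p = insert 1 (Finset.Ico 2 p) := by
  have h : Finset.Ico 2 p = Finset.Ioo 1 p := Finset.Ico_add_one_left_eq_Ioo 1 p
  rw [h, Finset.Ioo_insert_left (Fact.out : p.Prime).one_lt]

lemma Fd_eq (a : ZMod p) (ha : a ≠ 0) (N : Multiset (ZMod p)) :
    Fd p a N = (p - 1) + ∑ j ∈ Finset.Ico 2 p, (p - j) * (vmap a N).count j := by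
  rw [Fd]
  congr 1
  apply Finset.sum_congr rfl
  intro j hj
  rw [count_vmap a ha N (Finset.mem_Ico.mp hj).2]

lemma card_split (a : ZMod p) (ha : a ≠ 0) (N : Multiset (ZMod p)) (hN : ∀ z ∈ N, z ≠ 0) :
    N.card = N.count a + ∑ j ∈ Finset.Ico 2 p, N.count (a * (j : ℕ)) := by
  have h1 := natms_card (vmap a N) (vmap_mem a N hN ha)
  rw [vmap_card] at h1
  rw [h1, Ico1p_eq, Finset.sum_insert (by simp)]
  congr 1
  · rw [count_vmap a ha N (Fact.out : p.Prime).one_lt]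
    norm_num
  · apply Finset.sum_congr rfl
    intro j hj
    rw [count_vmap a ha N (Finset.mem_Ico.mp hj).2]

end Aux
section Aux2

variable {p : ℕ} [Fact p.Prime]

lemma j0_facts (a w : ZMod p) (ha : a ≠ 0) (hw : w ≠ 0) (hwa : w ≠ a) :
    2 ≤ (a⁻¹ * w).val ∧ (a⁻¹ * w).val < p ∧ a * (((a⁻¹ * w).val : ℕ) : ZMod p) = w := by
  haveI : NeZero p := ⟨(Fact.out : p.Prime).ne_zero⟩
  have hne : a⁻¹ * w ≠ 0 := mul_ne_zero (inv_ne_zero ha) hw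
  have h0 : (a⁻¹ * w).val ≠ 0 := fun h => hne ((ZMod.val_eq_zero _).mp h)
  have h1 : (a⁻¹ * w).val ≠ 1 := by
    intro h
    have : a⁻¹ * w = 1 := by
      have := congrArg (fun m : ℕ => (m : ZMod p)) h
      simpa [ZMod.natCast_val, ZMod.cast_id] using this
    apply hwa
    calc w = a * (a⁻¹ * w) := by rw [← mul_assoc, mul_inv_cancel₀ ha, one_mul]
    _ = a := by rw [this, mul_one]
  refine ⟨by omega, ZMod.val_lt _, ?_⟩
  rw [ZMod.natCast_val, ZMod.cast_id, ← mul_assoc, mul_inv_cancel₀ ha, one_mul]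

lemma acast_inj {a : ZMod p} (ha : a ≠ 0) {i j : ℕ} (hi : i < p) (hj : j < p)
    (h : a * (i : ZMod p) = a * (j : ZMod p)) : i = j := by
  haveI : NeZero p := ⟨(Fact.out : p.Prime).ne_zero⟩
  exact castInj hi hj (mul_left_cancel₀ ha h)

lemma Fd_erase (a w : ZMod p) (ha : a ≠ 0) (hw : w ≠ 0) (hwa : w ≠ a)
    (N : Multiset (ZMod p)) (hmem : w ∈ N) :
    Fd p a (N.erase w) + (p - (a⁻¹ * w).val) = Fd p a N := by
  obtain ⟨hj2, hjp, hjw⟩ := j0_facts a w ha hw hwa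
  set j0 := (a⁻¹ * w).val with hj0
  have hj0mem : j0 ∈ Finset.Ico 2 p := Finset.mem_Ico.mpr ⟨hj2, hjp⟩
  rw [Fd, Fd, Finset.sum_eq_sum_sdiff_singleton_add hj0mem, Finset.sum_eq_sum_sdiff_singleton_add hj0mem]
  have hoff : ∀ j ∈ Finset.Ico 2 p \ {j0},
      (p - j) * (N.erase w).count (a * (j : ℕ)) = (p - j) * N.count (a * (j : ℕ)) := by
    intro j hj
    obtain ⟨hj', hj''⟩ := Finset.mem_sdiff.mp hj
    have : a * ((j : ℕ) : ZMod p) ≠ w := by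
      intro h
      apply Finset.notMem_singleton.mp hj''
      exact acast_inj ha (Finset.mem_Ico.mp hj').2 hjp (by rw [h, hjw])
    rw [Multiset.count_erase_of_ne this]
  rw [Finset.sum_congr rfl hoff]
  have hcw : (N.erase w).count (a * ((j0 : ℕ) : ZMod p)) = N.count (a * ((j0:ℕ) : ZMod p)) - 1 := by
    rw [hjw, Multiset.count_erase_self]
  rw [hcw, hjw]
  have hcpos : 1 ≤ N.count w := Multiset.one_le_count_iff_mem.mpr hmem
  have h1 : (p - j0) * (N.count w - 1) + (p - j0) = (p - j0) * N.count w := by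
    cases' Nat.exists_eq_add_of_le hcpos with k hk
    rw [hk, Nat.add_sub_cancel_left, mul_add, mul_one]
    omega
  omega

lemma Fd_erase_self (a : ZMod p) (ha : a ≠ 0) (N : Multiset (ZMod p)) :
    Fd p a (N.erase a) = Fd p a N := by
  rw [Fd, Fd]
  congr 1
  apply Finset.sum_congr rfl
  intro j hj
  obtain ⟨hj2, hjp⟩ := Finset.mem_Ico.mp hj
  have : a * ((j:ℕ) : ZMod p) ≠ a := by
    intro h
    nth_rewrite 2 [show a = a * ((1:ℕ) : ZMod p) by simp] at h
    have := acast_inj ha hjp (Fact.out : p.Prime).one_lt h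
    omega
  rw [Multiset.count_erase_of_ne this]

lemma Fd_single_le (a w : ZMod p) (ha : a ≠ 0) (hw : w ≠ 0) (hwa : w ≠ a)
    (N : Multiset (ZMod p)) :
    (p - 1) + (p - (a⁻¹ * w).val) * N.count w ≤ Fd p a N := by
  obtain ⟨hj2, hjp, hjw⟩ := j0_facts a w ha hw hwa
  rw [Fd]
  apply Nat.add_le_add_left
  have hmemj : (a⁻¹*w).val ∈ Finset.Ico 2 p := Finset.mem_Ico.mpr ⟨hj2, hjp⟩
  calc (p - (a⁻¹*w).val) * N.count w = (p - (a⁻¹*w).val) * N.count (a * (((a⁻¹*w).val : ℕ) : ZMod p)) := by rw [hjw]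
  _ ≤ _ := Finset.single_le_sum (f := fun j => (p - j) * N.count (a * (j:ℕ))) (fun i _ => Nat.zero_le _) hmemj

lemma Fd_pair_le (a x y : ZMod p) (ha : a ≠ 0) (hx : x ≠ 0) (hy : y ≠ 0)
    (hxa : x ≠ a) (hya : y ≠ a) (hxy : x ≠ y) (N : Multiset (ZMod p)) :
    (p - 1) + ((p - (a⁻¹ * x).val) * N.count x + (p - (a⁻¹ * y).val) * N.count y) ≤ Fd p a N := by
  obtain ⟨hx2, hxp, hxw⟩ := j0_facts a x ha hx hxa
  obtain ⟨hy2, hyp, hyw⟩ := j0_facts a y ha hy hya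
  have hne : (a⁻¹ * x).val ≠ (a⁻¹ * y).val := by
    intro h
    apply hxy
    rw [← hxw, ← hyw, h]
  rw [Fd]
  apply Nat.add_le_add_left
  have hsub : {(a⁻¹ * x).val, (a⁻¹ * y).val} ⊆ Finset.Ico 2 p := by
    intro t ht
    rcases Finset.mem_insert.mp ht with h | h
    · subst h; exact Finset.mem_Ico.mpr ⟨hx2, hxp⟩
    · rw [Finset.mem_singleton.mp h]; exact Finset.mem_Ico.mpr ⟨hy2, hyp⟩
  calc (p - (a⁻¹*x).val) * N.count x + (p - (a⁻¹*y).val) * N.count y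
      = ∑ j ∈ ({(a⁻¹ * x).val, (a⁻¹ * y).val} : Finset ℕ), (p - j) * N.count (a * (j:ℕ)) := by
        rw [Finset.sum_pair hne, hxw, hyw]
  _ ≤ _ := Finset.sum_le_sum_of_subset hsub

lemma Fd_card_le (a : ZMod p) (ha : a ≠ 0) (N : Multiset (ZMod p)) (hN : ∀ z ∈ N, z ≠ 0) :
    (p - 1) + (N.card - N.count a) ≤ Fd p a N := by
  have hsplit := card_split a ha N hN
  rw [Fd]
  apply Nat.add_le_add_left
  have : N.card - N.count a = ∑ j ∈ Finset.Ico 2 p, N.count (a * (j:ℕ)) := by omega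
  rw [this]
  apply Finset.sum_le_sum
  intro j hj
  obtain ⟨hj2, hjp⟩ := Finset.mem_Ico.mp hj
  have : 1 ≤ p - j := by omega
  calc N.count (a * (j:ℕ)) = 1 * N.count (a * (j:ℕ)) := (one_mul _).symm
  _ ≤ (p - j) * N.count (a * (j:ℕ)) := Nat.mul_le_mul_right _ this

lemma pmul_split (c : ℕ → ℕ) :
    ∑ j ∈ Finset.Ico 2 p, (p - j) * c j + ∑ j ∈ Finset.Ico 2 p, j * c j
      = p * ∑ j ∈ Finset.Ico 2 p, c j := by
  rw [← Finset.sum_add_distrib, Finset.mul_sum]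
  apply Finset.sum_congr rfl
  intro j hj
  obtain ⟨_, hjp⟩ := Finset.mem_Ico.mp hj
  rw [← Nat.add_mul]
  congr 1
  omega

end Aux2
section Aux3

variable {p : ℕ} [Fact p.Prime]

lemma key_cong (x : ZMod p) (hx : x ≠ 0) (N : Multiset (ZMod p)) (hN : ∀ z ∈ N, z ≠ 0)
    (hsum : N.sum = x) (hC : N.count x ≤ Fd p x N) :
    N.count x + (p - 2) ≤ Fd p x N := by
  haveI : NeZero p := ⟨(Fact.out : p.Prime).ne_zero⟩
  haveI : Fact (1 < p) := ⟨(Fact.out : p.Prime).one_lt⟩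
  set K := (vmap x N).sum with hKdef
  have hK1 : ((K : ℕ) : ZMod p) = 1 := by
    rw [hKdef, vmap_sum_cast x hx, hsum, inv_mul_cancel₀ hx]
  have hKmod : K % p = 1 := by
    have hv := ZMod.val_natCast (n := p) K
    rw [hK1, ZMod.val_one] at hv
    omega
  have hKsum : K = N.count x + ∑ j ∈ Finset.Ico 2 p, j * (vmap x N).count j := by
    rw [hKdef, natms_sum (vmap x N) (vmap_mem x N hN hx), Ico1p_eq,
      Finset.sum_insert (by simp), one_mul, count_vmap x hx N (Fact.out : p.Prime).one_lt]
    norm_num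
  have hFd : Fd p x N + ∑ j ∈ Finset.Ico 2 p, j * (vmap x N).count j
      = (p - 1) + p * ∑ j ∈ Finset.Ico 2 p, (vmap x N).count j := by
    rw [Fd_eq x hx]
    have := pmul_split (p := p) (fun j => (vmap x N).count j)
    omega
  have hdiv : p * (K / p) + 1 = K := by
    have := Nat.div_add_mod K p
    omega
  have hmul : p * (∑ j ∈ Finset.Ico 2 p, (vmap x N).count j + 1)
      = p * ∑ j ∈ Finset.Ico 2 p, (vmap x N).count j + p := by ring
  have hPQ : p * (K / p) < p * (∑ j ∈ Finset.Ico 2 p, (vmap x N).count j + 1) := by omega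
  have hQR : K / p ≤ ∑ j ∈ Finset.Ico 2 p, (vmap x N).count j := by
    have := Nat.lt_of_mul_lt_mul_left hPQ
    omega
  have hle : p * (K / p) ≤ p * ∑ j ∈ Finset.Ico 2 p, (vmap x N).count j :=
    Nat.mul_le_mul_left p hQR
  omega

lemma lemA (N : Multiset (ZMod p)) (hN : ∀ z ∈ N, z ≠ 0) (x : ZMod p) (hx : x ∈ N)
    (hmax : ∀ z, N.count z ≤ N.count x)
    (hC : ∀ a, a ≠ 0 → N.count a ≤ Fd p a N) :
    ∀ a, a ≠ 0 → (N.erase x).count a ≤ Fd p a (N.erase x) := by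
  intro a ha
  have hx0 : x ≠ 0 := hN x hx
  by_cases hax : a = x
  · subst hax
    rw [Fd_erase_self a ha, Multiset.count_erase_self]
    have := hC a ha
    omega
  · have hxa : x ≠ a := fun h => hax h.symm
    obtain ⟨hj2, hjp, _⟩ := j0_facts a x ha hx0 hxa
    have hE := Fd_erase a x ha hx0 hxa N hx
    have hS := Fd_single_le a x ha hx0 hxa N
    have hcnt : (N.erase x).count a = Multiset.count a N := Multiset.count_erase_of_ne hax N
    have hca : N.count a ≤ N.count x := hmax a
    have hc1 : 1 ≤ N.count x := Multiset.one_le_count_iff_mem.mpr hx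
    have hprod : N.count x ≤ (p - (a⁻¹ * x).val) * N.count x :=
      Nat.le_mul_of_pos_left _ (by omega)
    omega

lemma lemB (N : Multiset (ZMod p)) (hN : ∀ z ∈ N, z ≠ 0) (x : ZMod p) (hx : x ∈ N)
    (hmax : ∀ z, N.count z ≤ N.count x) (hsum : N.sum = x)
    (hC : ∀ a, a ≠ 0 → N.count a ≤ Fd p a N)
    (y : ZMod p) (hy : y ∈ N) (hyx : y ≠ x) :
    ∀ a, a ≠ 0 → (N.erase y).count a ≤ Fd p a (N.erase y) := by
  haveI : NeZero p := ⟨(Fact.out : p.Prime).ne_zero⟩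
  have hx0 : x ≠ 0 := hN x hx
  have hy0 : y ≠ 0 := hN y hy
  have hp3 : 3 ≤ p := by
    have h1 : x.val ≠ y.val := fun h => hyx (ZMod.val_injective p h).symm
    have h2 : x.val ≠ 0 := fun h => hx0 ((ZMod.val_eq_zero x).mp h)
    have h3 : y.val ≠ 0 := fun h => hy0 ((ZMod.val_eq_zero y).mp h)
    have h4 := ZMod.val_lt x
    have h5 := ZMod.val_lt y
    omega
  intro a ha
  by_cases hay : a = y
  · subst hay
    rw [Fd_erase_self a ha, Multiset.count_erase_self]
    have := hC a ha
    omega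
  · have hya' : y ≠ a := fun h => hay h.symm
    have hE := Fd_erase a y ha hy0 hya' N hy
    have hcnt : (N.erase y).count a = Multiset.count a N := Multiset.count_erase_of_ne hay N
    obtain ⟨hj2, hjp, _⟩ := j0_facts a y ha hy0 hya'
    by_cases hax : a = x
    · subst hax
      have hK := key_cong a ha N hN hsum (hC a ha)
      omega
    · have hxa : x ≠ a := fun h => hax h.symm
      have hxy : x ≠ y := fun h => hyx h.symm
      have hP := Fd_pair_le a x y ha hx0 hy0 hxa hya' hxy N
      obtain ⟨hi2, hip, _⟩ := j0_facts a x ha hx0 hxa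
      have hca : N.count a ≤ N.count x := hmax a
      have hcy : 1 ≤ N.count y := Multiset.one_le_count_iff_mem.mpr hy
      have hpx : N.count x ≤ (p - (a⁻¹ * x).val) * N.count x :=
        Nat.le_mul_of_pos_left _ (by omega)
      have hpy : (p - (a⁻¹ * y).val) ≤ (p - (a⁻¹ * y).val) * N.count y :=
        Nat.le_mul_of_pos_right _ (by omega)
      omega

end Aux3
section Suff

variable {p : ℕ} [Fact p.Prime]

lemma good_append (l : List (ZMod p)) (x : ZMod p) (hg : GoodL l)
    (hsum : (l.sum + x) ≠ 0) : GoodL (l ++ [x]) := by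
  intro j hj1 hj2
  rw [List.length_append, List.length_singleton] at hj2
  by_cases hle : j ≤ l.length
  · rw [List.take_append_of_le_length hle]
    exact hg j hj1 hle
  · have hj : j = l.length + 1 := by omega
    have : (l ++ [x]).take j = l ++ [x] := by
      apply List.take_of_length_le
      rw [List.length_append, List.length_singleton]
      omega
    rw [this, List.sum_append, List.sum_singleton]
    exact hsum

lemma suff : ∀ n (N : Multiset (ZMod p)), N.card = n → (∀ z ∈ N, z ≠ 0) → N ≠ 0 →
    N.sum ≠ 0 → (∀ a, a ≠ 0 → N.count a ≤ Fd p a N) →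
    ∃ l : List (ZMod p), (↑l : Multiset (ZMod p)) = N ∧ GoodL l := by
  intro n
  induction n with
  | zero =>
    intro N hcard _ hne _ _
    exact absurd (Multiset.card_eq_zero.mp hcard) hne
  | succ n ih =>
    intro N hcard hN hne hsum hC
    -- pick an element of maximal multiplicity
    obtain ⟨x, _, hmax⟩ := Finset.exists_max_image (Finset.univ : Finset (ZMod p))
      (fun z => N.count z) ⟨0, Finset.mem_univ 0⟩
    have hmax : ∀ z, N.count z ≤ N.count x := fun z => hmax z (Finset.mem_univ z)
    obtain ⟨w, hw⟩ := Multiset.exists_mem_of_ne_zero hne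
    have hxmem : x ∈ N := by
      rw [← Multiset.one_le_count_iff_mem]
      calc 1 ≤ N.count w := Multiset.one_le_count_iff_mem.mpr hw
      _ ≤ N.count x := hmax w
    have hx0 : x ≠ 0 := hN x hxmem
    rcases Nat.eq_zero_or_pos n with hn | hn
    · -- singleton case
      subst hn
      obtain ⟨z, hz⟩ := Multiset.card_eq_one.mp hcard
      refine ⟨[z], by simp [hz], ?_⟩
      intro j hj1 hj2
      simp only [List.length_singleton] at hj2
      have : j = 1 := by omega
      subst this
      simpa [hz] using hsum
    · -- at least two elements
      have hcard2 : 2 ≤ N.card := by omega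
      -- helper to conclude from a removable element
      have finish : ∀ w : ZMod p, w ∈ N → N.sum ≠ w →
          (∀ a, a ≠ 0 → (N.erase w).count a ≤ Fd p a (N.erase w)) →
          ∃ l : List (ZMod p), (↑l : Multiset (ZMod p)) = N ∧ GoodL l := by
        intro w hwmem hws hC'
        have herase_card : (N.erase w).card = n := by
          rw [Multiset.card_erase_of_mem hwmem, hcard]
          rfl
        have herase_ne : N.erase w ≠ 0 := by
          intro h
          have := Multiset.card_eq_zero.mpr h
          omega
        have hsum_erase : w + (N.erase w).sum = N.sum := by
          rw [← Multiset.sum_cons, Multiset.cons_erase hwmem]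
        have herase_sum : (N.erase w).sum ≠ 0 := by
          intro h
          rw [h, add_zero] at hsum_erase
          exact hws hsum_erase.symm
        obtain ⟨l, hlN, hlg⟩ := ih (N.erase w) herase_card
          (fun z hz => hN z (Multiset.mem_of_mem_erase hz)) herase_ne herase_sum hC'
        refine ⟨l ++ [w], ?_, ?_⟩
        · have h1 : (↑(l ++ [w]) : Multiset (ZMod p)) = ↑l + ↑([w] : List (ZMod p)) :=
            (Multiset.coe_add l [w]).symm
          rw [h1, hlN, Multiset.coe_singleton, add_comm, Multiset.singleton_add,
            Multiset.cons_erase hwmem]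
        · apply good_append l w hlg
          have : l.sum = (N.erase w).sum := by rw [← hlN]; simp
          rw [this]
          rw [add_comm] at hsum_erase
          rw [hsum_erase]
          exact hsum
      by_cases hxs : N.sum = x
      · -- pick y ≠ x
        have hally : ¬ (∀ z ∈ N, z = x) := by
          intro hall
          have hrep : N = Multiset.replicate (n+1) x :=
            Multiset.eq_replicate.mpr ⟨hcard, hall⟩
          have hFdx : Fd p x N = p - 1 := by
            rw [Fd]
            have : ∀ j ∈ Finset.Ico 2 p, (p - j) * N.count (x * ((j : ℕ) : ZMod p)) = 0 := by
              intro j hj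
              obtain ⟨hj2, hjp⟩ := Finset.mem_Ico.mp hj
              have hne' : x * ((j:ℕ) : ZMod p) ≠ x := by
                intro h
                nth_rewrite 2 [show x = x * ((1:ℕ) : ZMod p) by simp] at h
                have := acast_inj hx0 hjp (Fact.out : p.Prime).one_lt h
                omega
              rw [hrep, Multiset.count_replicate, if_neg (fun h => hne' h.symm)]
              simp
            rw [Finset.sum_congr rfl this]
            simp
          have hcx : N.count x = n + 1 := by
            rw [hrep, Multiset.count_replicate, if_pos rfl]
          have hlep : n + 1 ≤ p - 1 := by
            have := hC x hx0
            rw [hFdx] at this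
            omega
          have hsum' : ((n+1 : ℕ) : ZMod p) * x = x := by
            conv_rhs => rw [← hxs, hrep]
            rw [Multiset.sum_replicate, nsmul_eq_mul]
          have : ((n+1 : ℕ) : ZMod p) = 1 := by
            have h1 : ((n+1 : ℕ) : ZMod p) * x = 1 * x := by rw [hsum', one_mul]
            exact mul_right_cancel₀ hx0 h1
          have hmod : (n+1) % p = 1 % p := by
            rwa [show (1 : ZMod p) = ((1:ℕ) : ZMod p) by norm_num,
              ZMod.natCast_eq_natCast_iff'] at this
          have hp2 : 2 ≤ p := (Fact.out : p.Prime).two_le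
          rw [Nat.mod_eq_of_lt (by omega), Nat.mod_eq_of_lt (by omega)] at hmod
          omega
        push_neg at hally
        obtain ⟨y, hy, hyx⟩ := hally
        apply finish y hy (by rw [hxs]; exact fun h => hyx h.symm)
        exact lemB N hN x hxmem hmax hxs hC y hy hyx
      · apply finish x hxmem hxs
        exact lemA N hN x hxmem hmax hC

end Suff
section Nec

variable {p : ℕ} [Fact p.Prime]

lemma natdiv (v : List ℕ) : ∀ (s : ℕ), (∀ e ∈ v, e < p) →
    (∀ j, 1 ≤ j → j ≤ v.length → ¬ p ∣ (s + (v.take j).sum)) →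
    (s + v.sum) / p ≤ s / p + ∑ j ∈ Finset.Ico 2 p, (↑v : Multiset ℕ).count j := by
  have hp2 : 2 ≤ p := (Fact.out : p.Prime).two_le
  induction v with
  | nil => intro s _ _; simp
  | cons e t ih =>
    intro s hlt hnd
    have he : e < p := hlt e (by simp)
    have hstep : (s + e) / p ≤ s / p + (if 2 ≤ e then 1 else 0) := by
      rcases Nat.lt_or_ge e 2 with h2 | h2
      · rw [if_neg (by omega)]
        interval_cases e
        · simp
        · have hnd1 : ¬ p ∣ (s + 1) := by
            have := hnd 1 (le_refl 1) (by simp)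
            simpa using this
          rw [Nat.succ_div, if_neg hnd1]
      · rw [if_pos h2]
        have h1 : s + e ≤ s + p := by omega
        calc (s + e) / p ≤ (s + p) / p := Nat.div_le_div_right h1
        _ = s / p + 1 := Nat.add_div_right s (by omega)
    have hnd' : ∀ j, 1 ≤ j → j ≤ t.length → ¬ p ∣ ((s + e) + (t.take j).sum) := by
      intro j h1 h2
      have := hnd (j+1) (by omega) (by simp only [List.length_cons]; omega)
      rw [List.take_succ_cons, List.sum_cons] at this
      rwa [← add_assoc] at this
    have iht := ih (s + e) (fun e' he' => hlt e' (List.mem_cons_of_mem _ he')) hnd'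
    have hsum_count : ∑ j ∈ Finset.Ico 2 p, (↑(e :: t) : Multiset ℕ).count j
        = (∑ j ∈ Finset.Ico 2 p, (↑t : Multiset ℕ).count j) + (if 2 ≤ e then 1 else 0) := by
      have hc : ∀ j, (↑(e :: t) : Multiset ℕ).count j
          = (↑t : Multiset ℕ).count j + (if j = e then 1 else 0) := by
        intro j
        rw [← Multiset.cons_coe, Multiset.count_cons]
      simp_rw [hc]
      rw [Finset.sum_add_distrib]
      congr 1
      rw [Finset.sum_ite_eq' (Finset.Ico 2 p) e (fun _ => 1)]
      by_cases h2 : 2 ≤ e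
      · rw [if_pos (Finset.mem_Ico.mpr ⟨h2, he⟩), if_pos h2]
      · rw [if_neg (fun hm => h2 (Finset.mem_Ico.mp hm).1), if_neg h2]
    rw [List.sum_cons, ← add_assoc, hsum_count]
    calc (s + e + t.sum) / p ≤ (s + e) / p + ∑ j ∈ Finset.Ico 2 p, (↑t : Multiset ℕ).count j :=
      iht
    _ ≤ _ := by omega

lemma nec (l : List (ZMod p)) (hl0 : ∀ z ∈ l, z ≠ 0) (hg : GoodL l) :
    ∀ a : ZMod p, a ≠ 0 → (↑l : Multiset (ZMod p)).count a ≤ Fd p a (↑l) := by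
  haveI : NeZero p := ⟨(Fact.out : p.Prime).ne_zero⟩
  have hp2 : 2 ≤ p := (Fact.out : p.Prime).two_le
  intro a ha
  set N : Multiset (ZMod p) := (↑l : Multiset (ZMod p)) with hNdef
  have hN : ∀ z ∈ N, z ≠ 0 := fun z hz => hl0 z (Multiset.mem_coe.mp hz)
  set f : ZMod p → ℕ := fun z => (a⁻¹ * z).val with hfdef
  set v : List ℕ := l.map f with hvdef
  have hvcoe : (↑v : Multiset ℕ) = vmap a N := by
    rw [hvdef, hNdef, vmap]
    simp
    exact List.Perm.refl _
  have hmemv : ∀ e ∈ v, 1 ≤ e ∧ e < p := by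
    intro e he
    apply vmap_mem a N hN ha
    rw [← hvcoe]
    exact Multiset.mem_coe.mpr he
  have hcast : ∀ (u : List (ZMod p)), (((u.map f).sum : ℕ) : ZMod p) = a⁻¹ * u.sum := by
    intro u
    induction u with
    | nil => simp
    | cons z t iht =>
      simp only [List.map_cons, List.sum_cons, Nat.cast_add, iht, mul_add]
      congr 1
      rw [hfdef]
      simp [ZMod.natCast_val, ZMod.cast_id]
  have hnd : ∀ j, 1 ≤ j → j ≤ v.length → ¬ p ∣ (0 + (v.take j).sum) := by
    intro j h1 h2
    rw [zero_add]
    intro hdvd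
    have hj : j ≤ l.length := by
      rw [hvdef, List.length_map] at h2
      exact h2
    have hz : (((v.take j).sum : ℕ) : ZMod p) = 0 :=
      (ZMod.natCast_eq_zero_iff _ p).mpr hdvd
    rw [hvdef, ← List.map_take, hcast (l.take j)] at hz
    exact (mul_ne_zero (inv_ne_zero ha) (hg j h1 hj)) hz
  have hdiv := natdiv v 0 (fun e he => (hmemv e he).2) hnd
  rw [zero_add, Nat.zero_div, zero_add, hvcoe] at hdiv
  -- identities
  have hveq : v.sum = (vmap a N).sum := by
    rw [← hvcoe]
    exact (Multiset.sum_coe v).symm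
  have hm : (vmap a N).count 1 = N.count a := by
    rw [count_vmap a ha N (Fact.out : p.Prime).one_lt]
    norm_num
  have h1 : (vmap a N).sum = N.count a + ∑ j ∈ Finset.Ico 2 p, j * (vmap a N).count j := by
    rw [natms_sum (vmap a N) (vmap_mem a N hN ha), Ico1p_eq,
      Finset.sum_insert (by simp), one_mul, hm]
  have hFd : Fd p a N = (p - 1) + ∑ j ∈ Finset.Ico 2 p, (p - j) * (vmap a N).count j :=
    Fd_eq a ha N
  have hps := pmul_split (p := p) (fun j => (vmap a N).count j)
  have hdm := Nat.div_add_mod (vmap a N).sum p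
  have hrem : (vmap a N).sum % p < p := Nat.mod_lt _ (by omega)
  have hmul : p * ((vmap a N).sum / p) ≤ p * ∑ j ∈ Finset.Ico 2 p, (vmap a N).count j := by
    apply Nat.mul_le_mul_left
    rw [hveq] at hdiv
    exact hdiv
  omega

end Nec
section Core

variable {p : ℕ} [Fact p.Prime]

lemma upgrade (N : Multiset (ZMod p)) (hN : ∀ z ∈ N, z ≠ 0) (a : ZMod p) (ha : a ≠ 0)
    (hmax : ∀ z, N.count z ≤ N.count a) (hle : N.count a ≤ Fd p a N) :
    ∀ b, b ≠ 0 → N.count b ≤ Fd p b N := by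
  intro b hb
  by_cases hba : b = a
  · subst hba; exact hle
  · have hcard := Fd_card_le b hb N hN
    have hsplit := card_split b hb N hN
    obtain ⟨hj2, hjp, hjw⟩ := j0_facts b a hb ha (fun h => hba h.symm)
    have hterm : N.count a ≤ ∑ j ∈ Finset.Ico 2 p, N.count (b * (j : ℕ)) := by
      calc N.count a = N.count (b * (((b⁻¹ * a).val : ℕ) : ZMod p)) := by rw [hjw]
      _ ≤ _ := Finset.single_le_sum (f := fun j => N.count (b * (j : ℕ)))
          (fun i _ => Nat.zero_le _) (Finset.mem_Ico.mpr ⟨hj2, hjp⟩)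
    have hba' : N.count b ≤ N.count a := hmax b
    omega

theorem core (N : Multiset (ZMod p)) (hN : ∀ z ∈ N, z ≠ 0) (hne : N ≠ 0) :
    (∃ l : List (ZMod p), (↑l : Multiset (ZMod p)) = N ∧ GoodL l) ↔
    (N.sum ≠ 0 ∧ ∀ a, a ≠ 0 → N.count a ≤ Fd p a N) := by
  constructor
  · rintro ⟨l, rfl, hg⟩
    have hl0 : ∀ z ∈ l, z ≠ 0 := fun z hz => hN z (Multiset.mem_coe.mpr hz)
    have hlen : 1 ≤ l.length := by
      rcases l with _ | ⟨h, t⟩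
      · simp at hne
      · simp
    constructor
    · have := hg l.length hlen (le_refl _)
      rw [List.take_length] at this
      rwa [Multiset.sum_coe]
    · exact nec l hl0 hg
  · rintro ⟨hsum, hC⟩
    exact suff N.card N rfl hN hne hsum hC

lemma good_cons_zero (h : ZMod p) (t : List (ZMod p)) (hg : GoodL (h :: t)) :
    GoodL (h :: 0 :: t) := by
  intro j h1 h2
  rcases j with _ | j
  · omega
  rcases j with _ | j
  · have := hg 1 (by omega) (by simp)
    simpa using this
  · have hl : j + 1 ≤ (h :: t).length := by
      simp only [List.length_cons] at h2 ⊢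
      omega
    have := hg (j + 1) (by omega) hl
    simp only [List.take_succ_cons, List.sum_cons] at this ⊢
    rwa [zero_add]

lemma good_zeros (l : List (ZMod p)) (hg : GoodL l) (hne : l ≠ []) (k : ℕ) :
    ∃ l2 : List (ZMod p), (↑l2 : Multiset (ZMod p)) = ↑l + Multiset.replicate k (0 : ZMod p) ∧
      GoodL l2 ∧ l2 ≠ [] := by
  induction k with
  | zero => exact ⟨l, by simp, hg, hne⟩
  | succ k ihk =>
    obtain ⟨l2, hc, hg2, hne2⟩ := ihk
    rcases l2 with _ | ⟨h, t⟩
    · exact absurd rfl hne2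
    refine ⟨h :: 0 :: t, ?_, good_cons_zero h t hg2, by simp⟩
    have h1 : (↑(h :: 0 :: t) : Multiset (ZMod p)) = 0 ::ₘ ↑(h :: t) := by
      rw [← Multiset.cons_coe, ← Multiset.cons_coe, ← Multiset.cons_coe]
      rw [Multiset.cons_swap]
    rw [h1, hc, Multiset.replicate_succ, Multiset.add_cons]

lemma lift_list {α β : Type*} [DecidableEq α] :
    ∀ (l : List β) (s : Multiset α) (f : α → β), s.map f = ↑l →
      ∃ δ : List α, (↑δ : Multiset α) = s ∧ δ.map f = l := by
  intro l
  induction l with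
  | nil =>
    intro s f h
    rw [Multiset.coe_nil, Multiset.map_eq_zero] at h
    exact ⟨[], by simp [h], by simp⟩
  | cons b t iht =>
    intro s f h
    rw [← Multiset.cons_coe] at h
    obtain ⟨a, has, hfa, hrest⟩ := (Multiset.map_eq_cons f s (↑t) b).mpr h
    obtain ⟨δ, hδ, hmap⟩ := iht (s.erase a) f hrest
    exact ⟨a :: δ, by rw [← Multiset.cons_coe, hδ, Multiset.cons_erase has],
      by simp [hmap, hfa]⟩

lemma filter_prefix (l : List (ZMod p)) :
    ∀ j ≤ (l.filter (fun z => z ≠ 0)).length, ∃ i, i ≤ l.length ∧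
      ((l.filter (fun z => z ≠ 0)).take j).sum = (l.take i).sum ∧ (1 ≤ j → 1 ≤ i) := by
  induction l with
  | nil =>
    intro j hj
    simp only [List.filter_nil, List.length_nil, Nat.le_zero] at hj
    subst hj
    exact ⟨0, by simp, by simp, by omega⟩
  | cons x t iht =>
    intro j hj
    by_cases hx : x = 0
    · have hf : (x :: t).filter (fun z => z ≠ 0) = t.filter (fun z => z ≠ 0) := by
        rw [List.filter_cons_of_neg (by simp [hx])]
      rw [hf] at hj ⊢
      obtain ⟨i, hi, hs, hpos⟩ := iht j hj
      refine ⟨i + 1, by simp only [List.length_cons]; omega, ?_, fun _ => by omega⟩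
      rw [List.take_succ_cons, List.sum_cons, hx, zero_add, hs]
    · have hf : (x :: t).filter (fun z => z ≠ 0) = x :: t.filter (fun z => z ≠ 0) := by
        rw [List.filter_cons_of_pos (by simp [hx])]
      rw [hf] at hj ⊢
      rcases j with _ | j
      · exact ⟨0, by simp, by simp, by omega⟩
      · simp only [List.length_cons] at hj
        obtain ⟨i, hi, hs, _⟩ := iht j (by omega)
        refine ⟨i + 1, by simp only [List.length_cons]; omega, ?_, fun _ => by omega⟩
        rw [List.take_succ_cons, List.take_succ_cons, List.sum_cons, List.sum_cons, hs]

end Core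

/-- Theorem 1: for a prime `p` and a partition `λ`, `c^{(p)}_λ ≠ 0` iff
`p ∤ |λ|` and, for some `a` with `r_a = max r(λ)`, one has
`max r(λ) ≤ |ᵇr(λ)|_p` where `ab ≡ 1 (mod p)`. -/
theorem stmt12 (p : ℕ) (hp : p.Prime) (lam : Multiset ℕ) (hlam : ∀ x ∈ lam, 0 < x) :
    cnum p lam ≠ 0 ↔
      (¬ p ∣ lam.sum ∧
        ∃ a b : ℕ, ∃ r' : ℕ → ℕ,
          1 ≤ a ∧ a ≤ p - 1 ∧ rres p lam a = maxr p (rres p lam) ∧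
          1 ≤ b ∧ b ≤ p - 1 ∧ a * b % p = 1 ∧
          (∀ i j, 1 ≤ i → i ≤ p - 1 → 1 ≤ j → j ≤ p - 1 →
            j % p = b * i % p → r' j = rres p lam i) ∧
          maxr p (rres p lam) ≤ absq p r') := by
  haveI : Fact p.Prime := ⟨hp⟩
  haveI : NeZero p := ⟨hp.ne_zero⟩
  haveI : Fact (1 < p) := ⟨hp.one_lt⟩
  have hp2 : 2 ≤ p := hp.two_le
  set M : Multiset (ZMod p) := lam.map (Nat.cast : ℕ → ZMod p) with hMdef
  set N : Multiset (ZMod p) := M.filter (fun z => z ≠ 0) with hNdef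
  have hN0 : ∀ z ∈ N, z ≠ 0 := fun z hz => (Multiset.mem_filter.mp hz).2
  -- rres as counts
  have hrres : ∀ j, 1 ≤ j → j < p → rres p lam j = N.count ((j : ℕ) : ZMod p) := by
    intro j hj1 hjp
    have hj0 : ((j : ℕ) : ZMod p) ≠ 0 := by
      rw [Ne, ZMod.natCast_eq_zero_iff]
      intro hdvd
      have := Nat.le_of_dvd (by omega) hdvd
      omega
    rw [hNdef, Multiset.count_filter, if_pos hj0, hMdef, Multiset.count_map, rres]
    congr 1
    apply Multiset.filter_congr
    intro i hi
    constructor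
    · rintro ⟨_, hmod⟩
      symm
      rw [ZMod.natCast_eq_natCast_iff', Nat.mod_eq_of_lt hjp]
      exact hmod
    · intro h
      refine ⟨hlam i hi, ?_⟩
      have := (ZMod.natCast_eq_natCast_iff' j i p).mp h
      rw [Nat.mod_eq_of_lt hjp] at this
      exact this.symm
  have hsum_cast : ((lam.sum : ℕ) : ZMod p) = N.sum := by
    have h1 : ((lam.sum : ℕ) : ZMod p) = M.sum := by
      rw [hMdef, Nat.cast_multiset_sum]
    have h2 : N + M.filter (fun z => ¬ z ≠ 0) = M := Multiset.filter_add_not _ M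
    have h3 : (M.filter (fun z => ¬ z ≠ 0)).sum = 0 := by
      apply Multiset.sum_eq_zero
      intro z hz
      have := (Multiset.mem_filter.mp hz).2
      push_neg at this
      exact this
    have h4 : M.sum = N.sum + (M.filter (fun z => ¬ z ≠ 0)).sum := by
      rw [← Multiset.sum_add, h2]
    rw [h1, h4, h3, add_zero]
  have hdvd : (¬ p ∣ lam.sum) ↔ N.sum ≠ 0 := by
    rw [← hsum_cast, Ne, ZMod.natCast_eq_zero_iff]
  constructor
  · -- forward
    intro hcnum
    rw [cnum, Ne, Nat.card_eq_zero, not_or] at hcnum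
    obtain ⟨⟨δ, hδm, hδq⟩⟩ := not_isEmpty_iff.mp hcnum.1
    have hδsum : lam.sum = δ.sum := by rw [← hδm, Multiset.sum_coe]
    have hnd : ¬ p ∣ lam.sum := by rw [hδsum]; exact hδq.1
    refine ⟨hnd, ?_⟩
    -- the residue list
    set l : List (ZMod p) := δ.map (Nat.cast : ℕ → ZMod p) with hldef
    have hlM : (↑l : Multiset (ZMod p)) = M := by
      rw [hldef, hMdef, ← hδm]
      simp
    have hlg : GoodL l := by
      intro j h1 h2
      rw [hldef, ← List.map_take]
      rw [← Nat.cast_list_sum]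
      rw [Ne, ZMod.natCast_eq_zero_iff]
      apply hδq.2 j h1
      rw [hldef, List.length_map] at h2
      exact h2
    set l' : List (ZMod p) := l.filter (fun z => z ≠ 0) with hl'def
    have hl'N : (↑l' : Multiset (ZMod p)) = N := by
      rw [hl'def, hNdef, ← hlM]
      simp
    have hl'0 : ∀ z ∈ l', z ≠ 0 := by
      intro z hz
      rw [hl'def, List.mem_filter] at hz
      simpa using hz.2
    have hl'g : GoodL l' := by
      intro j h1 h2
      obtain ⟨i, hi, hs, hpos⟩ := filter_prefix l j h2
      rw [hl'def, hs]
      exact hlg i (hpos h1) hi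
    have hnec : ∀ z : ZMod p, z ≠ 0 → N.count z ≤ Fd p z N := by
      intro z hz
      have := nec l' hl'0 hl'g z hz
      rwa [hl'N] at this
    -- choose a
    obtain ⟨a, haI, haeq⟩ := Finset.exists_mem_eq_sup (Finset.Ico 1 p)
      ⟨1, Finset.mem_Ico.mpr ⟨le_refl 1, hp.one_lt⟩⟩ (rres p lam)
    obtain ⟨ha1, halt⟩ := Finset.mem_Ico.mp haI
    have hA : ((a : ℕ) : ZMod p) ≠ 0 := by
      rw [Ne, ZMod.natCast_eq_zero_iff]
      intro hdvd
      have := Nat.le_of_dvd (by omega) hdvd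
      omega
    set A : ZMod p := ((a : ℕ) : ZMod p) with hAdef
    set b : ℕ := (A⁻¹).val with hbdef
    have hBcast : ((b : ℕ) : ZMod p) = A⁻¹ := by
      rw [hbdef, ZMod.natCast_val, ZMod.cast_id]
    have hible : A⁻¹ ≠ 0 := inv_ne_zero hA
    have hb1 : 1 ≤ b := by
      have : (A⁻¹).val ≠ 0 := fun h => hible ((ZMod.val_eq_zero _).mp h)
      omega
    have hbp : b < p := ZMod.val_lt _
    have hab : a * b % p = 1 := by
      have h1 : ((a * b : ℕ) : ZMod p) = 1 := by
        push_cast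
        rw [hBcast, mul_inv_cancel₀ hA]
      have h2 := ZMod.val_natCast (n := p) (a * b)
      rw [h1, ZMod.val_one] at h2
      omega
    refine ⟨a, b, fun j => N.count (A * ((j : ℕ) : ZMod p)), ha1, by omega, haeq.symm,
      hb1, by omega, hab, ?_, ?_⟩
    · intro i j hi1 hi2 hj1 hj2 hmod
      have hjA : A * ((j : ℕ) : ZMod p) = ((i : ℕ) : ZMod p) := by
        have hcj : ((j : ℕ) : ZMod p) = ((b * i : ℕ) : ZMod p) := by
          rw [ZMod.natCast_eq_natCast_iff']
          exact hmod
        rw [hcj]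
        push_cast
        rw [hBcast, ← mul_assoc, mul_inv_cancel₀ hA, one_mul]
      show N.count (A * ((j : ℕ) : ZMod p)) = rres p lam i
      rw [hjA, hrres i hi1 (by omega)]
    · have hmaxa : maxr p (rres p lam) = rres p lam a := haeq
      rw [hmaxa, hrres a ha1 halt]
      have := hnec A hA
      calc N.count A ≤ Fd p A N := this
      _ = absq p (fun j => N.count (A * ((j : ℕ) : ZMod p))) := rfl
  · -- backward
    rintro ⟨hnd, a, b, r', ha1, ha2, hamax, hb1, hb2, hab, hr', hler⟩
    have halt : a < p := by omega
    have hblt : b < p := by omega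
    set A : ZMod p := ((a : ℕ) : ZMod p) with hAdef
    set B : ZMod p := ((b : ℕ) : ZMod p) with hBdef
    have hA : A ≠ 0 := by
      rw [hAdef, Ne, ZMod.natCast_eq_zero_iff]
      intro hdvd
      have := Nat.le_of_dvd (by omega) hdvd
      omega
    have hABone : A * B = 1 := by
      have h1 : ((a * b : ℕ) : ZMod p) = ((1 : ℕ) : ZMod p) := by
        rw [ZMod.natCast_eq_natCast_iff', hab, Nat.mod_eq_of_lt (by omega)]
      push_cast at h1
      rw [← hAdef, ← hBdef] at h1
      exact h1
    have hBA : B = A⁻¹ := eq_inv_of_mul_eq_one_right hABone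
    have hNsum : N.sum ≠ 0 := hdvd.mp hnd
    have hNne : N ≠ 0 := by
      intro h
      rw [h] at hNsum
      simp at hNsum
    have hcntA : N.count A = rres p lam a := (hrres a ha1 halt).symm
    have hmaxA : ∀ z : ZMod p, N.count z ≤ N.count A := by
      intro z
      by_cases hz : z = 0
      · subst hz
        have : (0 : ZMod p) ∉ N := fun h => hN0 0 h rfl
        rw [Multiset.count_eq_zero_of_notMem this]
        exact Nat.zero_le _
      · have hzv1 : 1 ≤ z.val := by
          have : z.val ≠ 0 := fun h => hz ((ZMod.val_eq_zero z).mp h)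
          omega
        have hzvp : z.val < p := ZMod.val_lt z
        have hcz : N.count z = rres p lam z.val := by
          rw [hrres z.val hzv1 hzvp, ZMod.natCast_val, ZMod.cast_id]
        rw [hcz, hcntA, hamax]
        exact Finset.le_sup (Finset.mem_Ico.mpr ⟨hzv1, hzvp⟩)
    have hFd_absq : absq p r' = Fd p A N := by
      rw [absq, Fd]
      congr 1
      apply Finset.sum_congr rfl
      intro i hiI
      obtain ⟨hi2, hip⟩ := Finset.mem_Ico.mp hiI
      have hci : ((i : ℕ) : ZMod p) ≠ 0 := by
        rw [Ne, ZMod.natCast_eq_zero_iff]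
        intro hdvd
        have := Nat.le_of_dvd (by omega) hdvd
        omega
      have hAi : A * ((i : ℕ) : ZMod p) ≠ 0 := mul_ne_zero hA hci
      set i0 : ℕ := (A * ((i : ℕ) : ZMod p)).val with hi0def
      have hi01 : 1 ≤ i0 := by
        have : i0 ≠ 0 := fun h => hAi ((ZMod.val_eq_zero _).mp h)
        omega
      have hi0p : i0 < p := ZMod.val_lt _
      have hcast_i0 : ((i0 : ℕ) : ZMod p) = A * ((i : ℕ) : ZMod p) := by
        rw [hi0def, ZMod.natCast_val, ZMod.cast_id]
      have hmod : i % p = b * i0 % p := by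
        rw [← ZMod.natCast_eq_natCast_iff']
        push_cast
        rw [← hBdef, hcast_i0, ← mul_assoc, mul_comm B A, hABone, one_mul]
      have happ := hr' i0 i hi01 (by omega) (by omega) (by omega) hmod
      rw [happ, hrres i0 hi01 hi0p, hcast_i0]
    have hCA : N.count A ≤ Fd p A N := by
      rw [← hFd_absq, hcntA, hamax]
      exact hler
    have hC := upgrade N hN0 A hA hmaxA hCA
    obtain ⟨l, hlN, hlg⟩ := (core N hN0 hNne).mpr ⟨hNsum, hC⟩
    have hlne : l ≠ [] := by
      intro h
      rw [h] at hlN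
      exact hNne hlN.symm
    set k : ℕ := Multiset.card (M.filter (fun z => ¬ z ≠ 0)) with hkdef
    obtain ⟨l2, hl2c, hl2g, hl2ne⟩ := good_zeros l hlg hlne k
    have hl2M : (↑l2 : Multiset (ZMod p)) = M := by
      have hreplicate : M.filter (fun z => ¬ z ≠ 0) = Multiset.replicate k (0 : ZMod p) := by
        apply Multiset.eq_replicate.mpr
        refine ⟨rfl, ?_⟩
        intro z hz
        have := (Multiset.mem_filter.mp hz).2
        push_neg at this
        exact this
      rw [hl2c, hlN, ← hreplicate]
      exact Multiset.filter_add_not _ M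
    obtain ⟨δ, hδlam, hδmap⟩ := lift_list l2 lam (Nat.cast : ℕ → ZMod p) (by rw [← hMdef, hl2M])
    have hδsum : lam.sum = δ.sum := by rw [← hδlam, Multiset.sum_coe]
    have hQ : QCum p δ := by
      constructor
      · rw [← hδsum]
        exact hnd
      · intro j h1 h2
        intro hdvdj
        have hzero : (((δ.take j).sum : ℕ) : ZMod p) = 0 :=
          (ZMod.natCast_eq_zero_iff _ p).mpr hdvdj
        rw [Nat.cast_list_sum, List.map_take, hδmap] at hzero
        have hlen : j ≤ l2.length := by
          rw [← hδmap, List.length_map]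
          exact h2
        exact hl2g j h1 hlen hzero
    rw [cnum, Ne, Nat.card_eq_zero, not_or]
    constructor
    · rw [not_isEmpty_iff]
      exact ⟨⟨δ, hδlam, hQ⟩⟩
    · rw [not_infinite_iff_finite]
      have hsub : {δ : List ℕ | (↑δ : Multiset ℕ) = lam ∧ QCum p δ} ⊆
          ↑(lam.toList.permutations.toFinset) := by
        intro δ' hδ'
        rw [Finset.mem_coe, List.mem_toFinset, List.mem_permutations]
        rw [← Multiset.coe_eq_coe, Multiset.coe_toList]
        exact hδ'.1
      exact (Set.Finite.subset (Finset.finite_toSet _) hsub).to_subtype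
end

section
/- Let p be a prime number and λ a partition with r(λ) = (r₁,…,r_{p−1}). If p ∤ |λ| and there exist two distinct indices a ≠ c with 1 ≤ a, c ≤ p−1 such that r_a = r_c = max r(λ), then c^{(p)}_λ ≠ 0. -/
open Finset

/-- count of elements of `M` in residue class `j` mod `p`. -/
def cntc (p : ℕ) (M : Multiset ℕ) (j : ℕ) : ℕ := (M.filter (fun x => x % p = j)).card

def Pinv (p : ℕ) (M : Multiset ℕ) : Prop :=
  (∀ x ∈ M, ¬ p ∣ x) ∧ ¬ p ∣ M.sum ∧
    ∀ j, 2 * cntc p M j ≤ Multiset.card M + 1 ∨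
      (2 * cntc p M j = Multiset.card M + 2 ∧ j ≠ M.sum % p)

lemma cntc_cons (p x : ℕ) (M : Multiset ℕ) (j : ℕ) :
    cntc p (x ::ₘ M) j = (if x % p = j then 1 else 0) + cntc p M j := by
  simp only [cntc, Multiset.filter_cons]
  split <;> simp <;> omega

lemma cntc_le_card (p : ℕ) (M : Multiset ℕ) (j : ℕ) : cntc p M j ≤ Multiset.card M :=
  Multiset.card_le_card (Multiset.filter_le _ M)

lemma cntc_pair_le (p : ℕ) (M : Multiset ℕ) {k k0 : ℕ} (h : k ≠ k0) :
    cntc p M k + cntc p M k0 ≤ Multiset.card M := by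
  classical
  have h1 : cntc p M k + (M.filter (fun x => ¬ x % p = k)).card = Multiset.card M := by
    rw [cntc, ← Multiset.card_add, Multiset.filter_add_not]
  have h2 : cntc p M k0 ≤ (M.filter (fun x => ¬ x % p = k)).card := by
    apply Multiset.card_le_card
    apply Multiset.monotone_filter_right
    intro b hb
    simp [hb, h.symm]
  omega

lemma exists_mem_class {p : ℕ} (M : Multiset ℕ) (j : ℕ) (h : 0 < cntc p M j) :
    ∃ x ∈ M, x % p = j := by
  obtain ⟨x, hx⟩ := Multiset.card_pos_iff_exists_mem.mp h
  exact ⟨x, (Multiset.mem_filter.mp hx).1, (Multiset.mem_filter.mp hx).2⟩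

lemma exists_mem_not_class {p : ℕ} (M : Multiset ℕ) (j : ℕ)
    (h : cntc p M j < Multiset.card M) : ∃ x ∈ M, x % p ≠ j := by
  by_contra hc
  push_neg at hc
  have : M.filter (fun x => x % p = j) = M := Multiset.filter_eq_self.mpr hc
  simp [cntc, this] at h

lemma modne_imp_not_dvd {p x s' : ℕ} (h : x % p ≠ (x + s') % p) : ¬ p ∣ s' := by
  intro hd
  have h1 : (x + s') ≡ x + 0 [MOD p] := Nat.ModEq.add_left x (Nat.modEq_zero_iff_dvd.mpr hd)
  simp only [Nat.add_zero] at h1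
  exact h h1.symm

lemma modne_of_not_dvd {p x s' : ℕ} (hx : ¬ p ∣ x) : s' % p ≠ (x + s') % p := by
  intro h
  have h' : s' ≡ x + s' [MOD p] := h
  have := (Nat.modEq_iff_dvd' (Nat.le_add_left s' x)).mp h'
  simp only [Nat.add_sub_cancel] at this
  exact hx this

lemma pinv_step (p : ℕ) (M : Multiset ℕ) (hP : Pinv p M) (h2 : 2 ≤ Multiset.card M) :
    ∃ x M', M = x ::ₘ M' ∧ Pinv p M' := by
  classical
  obtain ⟨hnd, hσ, hJ⟩ := hP
  by_cases H : ∃ k0, Multiset.card M + 1 ≤ 2 * cntc p M k0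
  · obtain ⟨k0, hk0⟩ := H
    have hub : 2 * cntc p M k0 ≤ Multiset.card M + 2 := by
      rcases hJ k0 with h | ⟨h, _⟩ <;> omega
    have hother : ∀ k, k ≠ k0 → 2 * cntc p M k + 1 ≤ Multiset.card M := by
      intro k hk
      have := cntc_pair_le p M hk
      omega
    by_cases hk0σ : k0 = M.sum % p
    · -- the heavy class is the forbidden one; remove from another class
      have heq : 2 * cntc p M k0 = Multiset.card M + 1 := by
        rcases hJ k0 with h | ⟨h, hne⟩
        · omega
        · exact absurd hk0σ hne
      have hlt : cntc p M k0 < Multiset.card M := by omega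
      obtain ⟨x, hxM, hxk0⟩ := exists_mem_not_class M k0 hlt
      refine ⟨x, M.erase x, (Multiset.cons_erase hxM).symm, ?_⟩
      set M' := M.erase x with hM'
      have hMeq : M = x ::ₘ M' := (Multiset.cons_erase hxM).symm
      have hsum : M.sum = x + M'.sum := by rw [hMeq, Multiset.sum_cons]
      have hcard : Multiset.card M = Multiset.card M' + 1 := by
        rw [hMeq, Multiset.card_cons]
      have hxσ : x % p ≠ M.sum % p := by rw [hk0σ] at hxk0; exact hxk0
      have hσ' : ¬ p ∣ M'.sum := by
        apply modne_imp_not_dvd (x := x)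
        rw [← hsum]; exact hxσ
      have hcnt : ∀ j, cntc p M j = (if x % p = j then 1 else 0) + cntc p M' j := by
        intro j; rw [hMeq, cntc_cons]
      refine ⟨fun y hy => hnd y (by rw [hMeq]; exact Multiset.mem_cons_of_mem hy), hσ', ?_⟩
      intro j
      by_cases hj : j = k0
      · subst hj
        right
        constructor
        · have := hcnt j
          rw [if_neg hxk0] at this
          omega
        · have hne : M'.sum % p ≠ (x + M'.sum) % p := modne_of_not_dvd (hnd x hxM)
          rw [← hsum, ← hk0σ] at hne
          exact fun hc => hne (hc ▸ rfl)
      · left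
        have h1 := hother j hj
        have h2 := hcnt j
        split at h2 <;> omega
    · -- remove from the heavy class itself
      have hpos : 0 < cntc p M k0 := by omega
      obtain ⟨x, hxM, hxk0⟩ := exists_mem_class M k0 hpos
      refine ⟨x, M.erase x, (Multiset.cons_erase hxM).symm, ?_⟩
      set M' := M.erase x with hM'
      have hMeq : M = x ::ₘ M' := (Multiset.cons_erase hxM).symm
      have hsum : M.sum = x + M'.sum := by rw [hMeq, Multiset.sum_cons]
      have hcard : Multiset.card M = Multiset.card M' + 1 := by
        rw [hMeq, Multiset.card_cons]
      have hxσ : x % p ≠ M.sum % p := by rw [hxk0]; exact hk0σ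
      have hσ' : ¬ p ∣ M'.sum := by
        apply modne_imp_not_dvd (x := x)
        rw [← hsum]; exact hxσ
      have hcnt : ∀ j, cntc p M j = (if x % p = j then 1 else 0) + cntc p M' j := by
        intro j; rw [hMeq, cntc_cons]
      refine ⟨fun y hy => hnd y (by rw [hMeq]; exact Multiset.mem_cons_of_mem hy), hσ', ?_⟩
      intro j
      left
      by_cases hj : j = k0
      · subst hj
        have := hcnt j
        rw [if_pos hxk0] at this
        omega
      · have h1 := hother j hj
        have h2 := hcnt j
        split at h2 <;> omega
  · -- no heavy class: remove any element not in the forbidden class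
    push_neg at H
    have hlt : cntc p M (M.sum % p) < Multiset.card M := by
      have := H (M.sum % p)
      omega
    obtain ⟨x, hxM, hxσ⟩ := exists_mem_not_class M (M.sum % p) hlt
    refine ⟨x, M.erase x, (Multiset.cons_erase hxM).symm, ?_⟩
    set M' := M.erase x with hM'
    have hMeq : M = x ::ₘ M' := (Multiset.cons_erase hxM).symm
    have hsum : M.sum = x + M'.sum := by rw [hMeq, Multiset.sum_cons]
    have hcard : Multiset.card M = Multiset.card M' + 1 := by
      rw [hMeq, Multiset.card_cons]
    have hσ' : ¬ p ∣ M'.sum := by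
      apply modne_imp_not_dvd (x := x)
      rw [← hsum]; exact hxσ
    have hcnt : ∀ j, cntc p M j = (if x % p = j then 1 else 0) + cntc p M' j := by
      intro j; rw [hMeq, cntc_cons]
    refine ⟨fun y hy => hnd y (by rw [hMeq]; exact Multiset.mem_cons_of_mem hy), hσ', ?_⟩
    intro j
    left
    have h1 := H j
    have h2 := hcnt j
    split at h2 <;> omega

lemma pinv_key (p : ℕ) : ∀ (n : ℕ) (M : Multiset ℕ), Multiset.card M ≤ n → Pinv p M →
    ∃ δ : List ℕ, (↑δ : Multiset ℕ) = M ∧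
      ∀ j, 1 ≤ j → j ≤ δ.length → ¬ p ∣ (δ.take j).sum := by
  intro n
  induction n with
  | zero =>
    intro M hM hP
    have h0 : M = 0 := Multiset.card_eq_zero.mp (Nat.le_zero.mp hM)
    subst h0
    exact absurd (dvd_zero p) (by simpa using hP.2.1)
  | succ n ih =>
    intro M hM hP
    by_cases h1 : Multiset.card M ≤ 1
    · rcases Nat.le_one_iff_eq_zero_or_eq_one.mp h1 with h0 | h0
      · have h0 : M = 0 := Multiset.card_eq_zero.mp h0
        subst h0
        exact absurd (dvd_zero p) (by simpa using hP.2.1)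
      · obtain ⟨x, rfl⟩ := Multiset.card_eq_one.mp h0
        refine ⟨[x], by simp, ?_⟩
        intro j hj1 hj2
        simp only [List.length_singleton] at hj2
        have : j = 1 := le_antisymm hj2 hj1
        subst this
        simpa using (by simpa using hP.2.1 : ¬ p ∣ x)
    · obtain ⟨x, M', rfl, hP'⟩ := pinv_step p M hP (by omega)
      have hc : Multiset.card M' ≤ n := by
        have := Multiset.card_cons x M'
        omega
      obtain ⟨δ', hmult, hpre⟩ := ih M' hc hP'
      refine ⟨δ' ++ [x], ?_, ?_⟩
      · have : (↑(δ' ++ [x]) : Multiset ℕ) = ↑δ' + ↑[x] := by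
          rw [← Multiset.coe_add]
        rw [this, hmult]
        rw [add_comm]; simp [Multiset.singleton_add]
      · intro j hj1 hj2
        rw [List.length_append, List.length_singleton] at hj2
        by_cases hle : j ≤ δ'.length
        · have ht : (δ' ++ [x]).take j = δ'.take j := by
            rw [List.take_append]
            simp [Nat.sub_eq_zero_of_le hle]
          rw [ht]
          exact hpre j hj1 hle
        · have hj : j = δ'.length + 1 := by omega
          subst hj
          have ht : (δ' ++ [x]).take (δ'.length + 1) = δ' ++ [x] := by
            apply List.take_of_length_le
            simp
          rw [ht]
          have hsum : (δ' ++ [x]).sum = x + M'.sum := by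
            have : δ'.sum = M'.sum := by
              rw [← hmult]; simp
            rw [List.sum_append, this]
            simp [Nat.add_comm]
          rw [hsum]
          have := hP.2.1
          rwa [Multiset.sum_cons] at this

/-- Remark: if `p ∤ |λ|` and `r(λ)` attains its maximum at two distinct
indices `a ≠ c` in `[1, p-1]`, then `c^{(p)}_λ ≠ 0`. -/
theorem stmt14 (p : ℕ) (hp : p.Prime) (lam : Multiset ℕ) (hlam : ∀ x ∈ lam, 0 < x)
    (hdvd : ¬ p ∣ lam.sum)
    (a c : ℕ) (ha1 : 1 ≤ a) (ha2 : a ≤ p - 1) (hc1 : 1 ≤ c) (hc2 : c ≤ p - 1)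
    (hac : a ≠ c)
    (hmaxa : rres p lam a = maxr p (rres p lam))
    (hmaxc : rres p lam c = maxr p (rres p lam)) :
    cnum p lam ≠ 0 := by
  classical
  have hex : ∃ δ : List ℕ, (↑δ : Multiset ℕ) = lam ∧ QCum p δ := by
    classical
    have hp2 : 2 ≤ p := hp.two_le
    have hap : a < p := by omega
    have hcp : c < p := by omega
    set A := lam.filter (fun x => ¬ p ∣ x) with hA
    set B := lam.filter (fun x => p ∣ x) with hB
    have hsplit : B + A = lam := Multiset.filter_add_not _ lam
    have hBdvd : ∀ x ∈ B, p ∣ x := fun x hx => (Multiset.mem_filter.mp hx).2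
    have hBsum : p ∣ B.sum := Multiset.dvd_sum hBdvd
    have hAsum : ¬ p ∣ A.sum := by
      intro h
      exact hdvd (by rw [← hsplit, Multiset.sum_add]; exact dvd_add hBsum h)
    -- counts over A agree with rres for residues in [1, p-1]
    have hcnt : ∀ j, 1 ≤ j → j < p → cntc p A j = rres p lam j := by
      intro j hj1 hjp
      unfold cntc rres
      rw [hA, Multiset.filter_filter]
      congr 1
      apply Multiset.filter_congr
      intro x hx
      constructor
      · rintro ⟨hxj, -⟩
        exact ⟨hlam x hx, hxj⟩
      · rintro ⟨-, hxj⟩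
        refine ⟨hxj, fun hd => ?_⟩
        have : x % p = 0 := Nat.mod_eq_zero_of_dvd hd
        omega
    have hApos : ∀ x ∈ A, ¬ p ∣ x := fun x hx => (Multiset.mem_filter.mp hx).2
    have hcard2 : 2 * maxr p (rres p lam) ≤ Multiset.card A := by
      have h1 := cntc_pair_le p A (k := a) (k0 := c) hac
      rw [hcnt a ha1 hap, hcnt c hc1 hcp, hmaxa, hmaxc] at h1
      omega
    have hJA : ∀ j, 2 * cntc p A j ≤ Multiset.card A + 1 ∨
        (2 * cntc p A j = Multiset.card A + 2 ∧ j ≠ A.sum % p) := by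
      intro j
      left
      rcases Nat.lt_or_ge j 1 with hj | hj1
      · have hj0 : j = 0 := by omega
        subst hj0
        have hz : cntc p A 0 = 0 := by
          unfold cntc
          rw [Multiset.card_eq_zero, Multiset.filter_eq_nil]
          exact fun x hx hx0 => hApos x hx (Nat.dvd_of_mod_eq_zero hx0)
        omega
      rcases Nat.lt_or_ge j p with hjp | hjp
      · have h1 : cntc p A j ≤ maxr p (rres p lam) := by
          rw [hcnt j hj1 hjp]
          exact Finset.le_sup (Finset.mem_Ico.mpr ⟨hj1, hjp⟩)
        omega
      · have hz : cntc p A j = 0 := by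
          unfold cntc
          rw [Multiset.card_eq_zero, Multiset.filter_eq_nil]
          intro x hx hxj
          have : x % p < p := Nat.mod_lt x (by omega)
          omega
        omega
    have hPA : Pinv p A := ⟨hApos, hAsum, hJA⟩
    obtain ⟨δA, hδAmult, hδApre⟩ := pinv_key p (Multiset.card A) A le_rfl hPA
    have hδAsum : δA.sum = A.sum := by rw [← hδAmult]; simp
    have hLsum : B.toList.sum = B.sum := by simp
    refine ⟨δA ++ B.toList, ?_, ?_, ?_⟩
    · have h1 : (↑(δA ++ B.toList) : Multiset ℕ) = ↑δA + ↑B.toList := by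
        rw [← Multiset.coe_add]
      rw [h1, hδAmult, Multiset.coe_toList, add_comm, hsplit]
    · rw [List.sum_append, hδAsum, hLsum]
      exact fun h => hdvd (by rw [← hsplit, Multiset.sum_add, add_comm]; exact h)
    · intro j hj1 hj2
      rw [List.take_append, List.sum_append]
      by_cases hle : j ≤ δA.length
      · rw [Nat.sub_eq_zero_of_le hle]
        simpa using hδApre j hj1 hle
      · have ht : δA.take j = δA := List.take_of_length_le (by omega)
        rw [ht, hδAsum]
        have hpt : p ∣ (B.toList.take (j - δA.length)).sum := by
          apply List.dvd_sum
          intro y hy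
          have hyL : y ∈ B.toList := List.take_subset _ _ hy
          exact hBdvd y (by rwa [Multiset.mem_toList] at hyL)
        intro hcontra
        apply hAsum
        have := Nat.dvd_sub hcontra hpt
        rwa [Nat.add_sub_cancel] at this
  obtain ⟨δ, hδ, hQ⟩ := hex
  have hfin : Finite {l : List ℕ // (↑l : Multiset ℕ) = lam ∧ QCum p l} := by
    have hsub : {l : List ℕ | (↑l : Multiset ℕ) = lam ∧ QCum p l} ⊆
        {l | l ∈ lam.toList.permutations} := by
      intro l hl
      simp only [Set.mem_setOf_eq]
      rw [List.mem_permutations]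
      exact Multiset.coe_eq_coe.mp (by rw [Multiset.coe_toList]; exact hl.1)
    exact (Set.Finite.subset (List.finite_toSet _) hsub).to_subtype
  rw [cnum]
  exact Nat.card_ne_zero.mpr ⟨⟨⟨δ, hδ, hQ⟩⟩, hfin⟩
end
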